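/- arXiv:1606.09097 — 5 statements merged into one kernel-verified Lean document; each statement's English description precedes it below -/
import Mathlib

section
/- For every positive integer n there exist a constant c > 0 and a threshold k₀ such that for every integer k ≥ k₀, the number of finite-index subgroups N of ℤⁿ with diam(ℤⁿ/N) ≤ k is at least c·k^{n²}. -/
namespace Stmt0Aux

variable {n : ℕ}

def vrow (D : ℤ) (A : Fin n → Fin n → ℤ) (i : Fin n) : Fin n → ℤ :=
  fun j => (if i = j then D else 0) + A i j

def latt (D : ℤ) (A : Fin n → Fin n → ℤ) : AddSubgroup (Fin n → ℤ) :=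
  (Submodule.span ℤ (Set.range (vrow D A))).toAddSubgroup

lemma mem_latt {D : ℤ} {A : Fin n → Fin n → ℤ} {x : Fin n → ℤ} :
    x ∈ latt D A ↔ ∃ c : Fin n → ℤ, ∑ i, c i • vrow D A i = x := by
  rw [latt, Submodule.mem_toAddSubgroup, Submodule.mem_span_range_iff_exists_fun]

lemma vrow_mem {D : ℤ} {A : Fin n → Fin n → ℤ} (i : Fin n) : vrow D A i ∈ latt D A := by
  rw [latt, Submodule.mem_toAddSubgroup]
  exact Submodule.subset_span (Set.mem_range_self i)

lemma diam (a D : ℤ) (ha : 1 ≤ a) (hD : (n : ℤ) * a ≤ D)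
    {A : Fin n → Fin n → ℤ} (hA : ∀ i j, 0 ≤ A i j ∧ A i j < a)
    (y : Fin n → ℤ) :
    ∃ z : Fin n → ℤ, y - z ∈ latt D A ∧ ∑ i, |z i| ≤ (n : ℤ) * (D + a) := by
  classical
  have hQ : ∃ s : ℕ, ∃ z : Fin n → ℤ, y - z ∈ latt D A ∧ ∑ i, |z i| ≤ (s : ℤ) := by
    refine ⟨(∑ i, |y i|).toNat, y, by simp [latt], Int.self_le_toNat _⟩
  set s₀ := Nat.find hQ with hs₀
  obtain ⟨z, hzN, hzs⟩ := Nat.find_spec hQ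
  have hzsum : ∑ i, |z i| ≤ 0 + (s₀ : ℤ) := by simpa using hzs
  -- claim: every coordinate small
  have hcoord : ∀ j, |z j| ≤ D + a := by
    intro j
    by_contra hbig
    push_neg at hbig
    have hn1 : (1 : ℤ) ≤ (n : ℤ) := by
      exact_mod_cast Nat.one_le_iff_ne_zero.2 (fun h => by subst h; exact j.elim0)
    set ε : ℤ := if 0 ≤ z j then 1 else -1 with hε
    set z' : Fin n → ℤ := z - ε • vrow D A j with hz'
    have hmem : y - z' ∈ latt D A := by
      have : y - z' = (y - z) + ε • vrow D A j := by rw [hz']; abel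
      rw [this]
      exact add_mem hzN (AddSubgroup.zsmul_mem _ (vrow_mem j) ε)
    have hDpos : (n : ℤ) * a ≤ D := hD
    have hjj : vrow D A j j = D + A j j := by simp [vrow]
    have hjl : ∀ l, l ≠ j → vrow D A j l = A j l := by
      intro l hl; simp [vrow, (Ne.symm hl : j ≠ l)]
    -- bound on the j-th coordinate
    have hj' : |z' j| ≤ |z j| - D := by
      rw [hz']
      by_cases h0 : 0 ≤ z j
      · have hzj : D + a < z j := by rwa [abs_of_nonneg h0] at hbig
        have : z j - ε * vrow D A j j = z j - (D + A j j) := by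
          rw [hjj, hε, if_pos h0]; ring
        simp only [Pi.sub_apply, Pi.smul_apply, smul_eq_mul, this]
        rw [abs_of_nonneg (by have := (hA j j).2; omega), abs_of_nonneg h0]
        have := (hA j j).1; omega
      · have hzj : D + a < -z j := by
          rw [abs_of_neg (lt_of_not_ge h0)] at hbig; omega
        have : z j - ε * vrow D A j j = z j + (D + A j j) := by
          rw [hjj, hε, if_neg h0]; ring
        simp only [Pi.sub_apply, Pi.smul_apply, smul_eq_mul, this]
        rw [abs_of_nonpos (by have := (hA j j).2; omega), abs_of_neg (lt_of_not_ge h0)]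
        have := (hA j j).1; omega
    -- bound on other coordinates
    have hl' : ∀ l, l ≠ j → |z' l| ≤ |z l| + (a - 1) := by
      intro l hl
      rw [hz']
      simp only [Pi.sub_apply, Pi.smul_apply, smul_eq_mul, hjl l hl]
      have h1 := (hA j l).1
      have h2 := (hA j l).2
      have : |ε * A j l| ≤ a - 1 := by
        have hε1 : |ε| = 1 := by rw [hε]; split <;> simp
        rw [abs_mul, hε1, one_mul, abs_of_nonneg h1]
        omega
      calc |z l - ε * A j l| ≤ |z l| + |ε * A j l| := abs_sub _ _
        _ ≤ |z l| + (a - 1) := add_le_add le_rfl this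
    -- total decrease
    have hsum' : ∑ i, |z' i| ≤ (∑ i, |z i|) - 1 := by
      have key : ∑ i, |z' i| ≤ |z' j| + ∑ i ∈ Finset.univ.erase j, |z' i| := by
        rw [← Finset.add_sum_erase _ _ (Finset.mem_univ j)]
      have h2 : ∑ i ∈ Finset.univ.erase j, |z' i|
          ≤ ∑ i ∈ Finset.univ.erase j, (|z i| + (a - 1)) := by
        refine Finset.sum_le_sum fun i hi => hl' i (Finset.ne_of_mem_erase hi)
      have h3 : ∑ i ∈ Finset.univ.erase j, (|z i| + (a - 1))
          ≤ (∑ i ∈ Finset.univ.erase j, |z i|) + (n : ℤ) * (a - 1) := by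
        rw [Finset.sum_add_distrib, Finset.sum_const, nsmul_eq_mul]
        have hcard : ((Finset.univ.erase j).card : ℤ) ≤ (n : ℤ) := by
          have := Finset.card_le_univ (Finset.univ.erase j)
          simp only [Finset.card_univ, Fintype.card_fin] at this
          exact_mod_cast this
        have := mul_le_mul_of_nonneg_right hcard (by omega : (0:ℤ) ≤ a - 1)
        omega
      have h4 : (∑ i ∈ Finset.univ.erase j, |z i|) = (∑ i, |z i|) - |z j| := by
        rw [← Finset.add_sum_erase _ _ (Finset.mem_univ j)]; ring
      have hkey2 : D - (n : ℤ) * (a - 1) ≥ 1 := by nlinarith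
      calc ∑ i, |z' i| ≤ |z' j| + ∑ i ∈ Finset.univ.erase j, |z' i| := key
        _ ≤ (|z j| - D) + ((∑ i, |z i|) - |z j| + (n : ℤ) * (a - 1)) := by
            rw [h4] at h3
            omega
        _ ≤ (∑ i, |z i|) - 1 := by omega
    -- contradiction with minimality
    have hpos : (0 : ℤ) ≤ ∑ i, |z' i| := Finset.sum_nonneg fun i _ => abs_nonneg _
    have hs1 : 1 ≤ s₀ := by
      by_contra h
      push_neg at h
      interval_cases s₀
      omega
    have hQ' : ∃ z : Fin n → ℤ, y - z ∈ latt D A ∧ ∑ i, |z i| ≤ ((s₀ - 1 : ℕ) : ℤ) := by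
      refine ⟨z', hmem, ?_⟩
      push_cast [Nat.cast_sub hs1]
      omega
    exact Nat.find_min hQ (by omega) hQ'
  -- conclude
  refine ⟨z, hzN, ?_⟩
  calc ∑ i, |z i| ≤ ∑ _i : Fin n, (D + a) := Finset.sum_le_sum fun i _ => hcoord i
    _ = (n : ℤ) * (D + a) := by
        rw [Finset.sum_const, Finset.card_univ, Fintype.card_fin, nsmul_eq_mul]



lemma latt_inj (a : ℤ) (ha : 1 ≤ a) {A A' : Fin n → Fin n → ℤ}
    (hA : ∀ i j, 0 ≤ A i j ∧ A i j < a) (hA' : ∀ i j, 0 ≤ A' i j ∧ A' i j < a)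
    (h : latt (4 * (n : ℤ) * a) A = latt (4 * (n : ℤ) * a) A') : A = A' := by
  classical
  set D : ℤ := 4 * (n : ℤ) * a with hDdef
  have main : ∀ j, vrow D A' j = vrow D A j := by
    intro j
    have hn1 : (1 : ℤ) ≤ (n : ℤ) := by
      exact_mod_cast Nat.one_le_iff_ne_zero.2 (fun h0 => by subst h0; exact j.elim0)
    have hv : vrow D A' j ∈ latt D A := h ▸ vrow_mem j
    obtain ⟨c, hc⟩ := mem_latt.1 hv
    have h1 : ∀ l : Fin n, ∑ i, c i * ((if i = l then D else 0) + A i l)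
        = c l * D + ∑ i, c i * A i l := by
      intro l
      rw [Finset.sum_congr rfl
        (fun i _ => show c i * ((if i = l then D else 0) + A i l)
            = (if i = l then c i * D else 0) + c i * A i l by split_ifs <;> ring),
        Finset.sum_add_distrib, Finset.sum_ite_eq' Finset.univ l (fun i => c i * D),
        if_pos (Finset.mem_univ l)]
    have h2 : ∀ l : Fin n, c l * D + ∑ i, c i * A i l
        = (if j = l then D else 0) + A' j l := by
      intro l
      have h0 := congrFun hc l
      rw [Finset.sum_apply] at h0
      simp only [Pi.smul_apply, smul_eq_mul, vrow] at h0
      rw [← h1 l]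
      exact h0
    have expand : ∀ l : Fin n,
        D * (c l - (if l = j then 1 else 0)) = A' j l - ∑ i, c i * A i l := by
      intro l
      have h3 := h2 l
      by_cases hlj : l = j
      · subst hlj
        rw [if_pos rfl] at h3 ⊢
        linear_combination h3
      · rw [if_neg hlj]
        rw [if_neg (fun hh => hlj hh.symm)] at h3
        linear_combination h3
    set S : ℤ := ∑ i, |c i| with hSdef
    have hS0 : 0 ≤ S := Finset.sum_nonneg fun i _ => abs_nonneg _
    have hsum_bound : ∀ l, |∑ i, c i * A i l| ≤ S * (a - 1) := by
      intro l
      calc |∑ i, c i * A i l| ≤ ∑ i, |c i * A i l| := Finset.abs_sum_le_sum_abs _ _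
        _ ≤ ∑ i, |c i| * (a - 1) := Finset.sum_le_sum fun i _ => by
            rw [abs_mul, abs_of_nonneg (hA i l).1]
            exact mul_le_mul_of_nonneg_left (by have := (hA i l).2; omega) (abs_nonneg _)
        _ = S * (a - 1) := by rw [← Finset.sum_mul]
    have hEl : ∀ l, 4 * (n : ℤ) * |c l - (if l = j then 1 else 0)| ≤ S := by
      intro l
      set E : ℤ := c l - (if l = j then 1 else 0) with hEdef
      have hE0 : 0 ≤ |E| := abs_nonneg _
      have h4 : D * |E| ≤ (S + 1) * (a - 1) := by
        have : |D * E| = D * |E| := by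
          rw [abs_mul, abs_of_nonneg (by positivity : (0:ℤ) ≤ D)]
        rw [← this, expand l]
        calc |A' j l - ∑ i, c i * A i l| ≤ |A' j l| + |∑ i, c i * A i l| := abs_sub _ _
          _ ≤ (a - 1) + S * (a - 1) := by
              have := hsum_bound l
              have h5 : |A' j l| ≤ a - 1 := by
                rw [abs_of_nonneg (hA' j l).1]; have := (hA' j l).2; omega
              omega
          _ = (S + 1) * (a - 1) := by ring
      by_contra hcon
      push_neg at hcon
      have h6 : S + 1 ≤ 4 * (n : ℤ) * |E| := hcon
      have h7 : (S + 1) * a ≤ 4 * (n : ℤ) * |E| * a :=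
        mul_le_mul_of_nonneg_right h6 (by omega)
      rw [hDdef] at h4
      nlinarith
    have hSle1 : S ≤ 1 := by
      have hsum1 : ∑ l, (4 * (n : ℤ) * |c l - (if l = j then 1 else 0)|) ≤ ∑ _l : Fin n, S :=
        Finset.sum_le_sum fun l _ => hEl l
      rw [← Finset.mul_sum, Finset.sum_const, Finset.card_univ, Fintype.card_fin,
        nsmul_eq_mul] at hsum1
      have hlow : S - 1 ≤ ∑ l, |c l - (if l = j then 1 else 0)| := by
        have : ∀ l : Fin n, |c l| - (if l = j then 1 else 0)
            ≤ |c l - (if l = j then 1 else 0)| := by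
          intro l
          have := abs_sub_abs_le_abs_sub (c l) ((if l = j then (1:ℤ) else 0))
          have habs : |(if l = j then (1:ℤ) else 0)| = (if l = j then (1:ℤ) else 0) := by
            split <;> simp
          omega
        have hsum2 := Finset.sum_le_sum fun l (_ : l ∈ Finset.univ) => this l
        rw [Finset.sum_sub_distrib, Finset.sum_ite_eq' Finset.univ j (fun _ => (1:ℤ)),
          if_pos (Finset.mem_univ j)] at hsum2
        exact hsum2
      by_contra hcon
      push_neg at hcon
      have h8 : 2 ≤ S := hcon
      nlinarith
    have hceq : ∀ l : Fin n, c l = (if l = j then 1 else 0) := by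
      intro l
      have h9 := hEl l
      have h10 : |c l - (if l = j then 1 else 0)| = 0 := by
        by_contra h11
        have h12 : 1 ≤ |c l - (if l = j then 1 else 0)| := by
          have := abs_nonneg (c l - (if l = j then 1 else 0)); omega
        nlinarith
      have := abs_eq_zero.1 h10
      omega
    have : ∑ i, c i • vrow D A i = vrow D A j := by
      have hterm : ∀ i : Fin n, c i • vrow D A i = if i = j then vrow D A i else 0 := by
        intro i
        rw [hceq i]
        split <;> simp
      rw [Finset.sum_congr rfl fun i _ => hterm i,
        Finset.sum_ite_eq' Finset.univ j (fun i => vrow D A i), if_pos (Finset.mem_univ j)]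
    rw [this] at hc
    exact hc.symm
  funext i l
  have := congrFun (main i) l
  simp only [vrow] at this
  omega


lemma ball_finite (n k : ℕ) : {z : Fin n → ℤ | (∑ i, |z i|) ≤ (k : ℤ)}.Finite := by
  apply Set.Finite.subset (Set.Finite.pi fun _ : Fin n => Set.finite_Icc (-(k : ℤ)) (k : ℤ))
  intro z hz
  simp only [Set.mem_pi, Set.mem_univ, forall_true_left, Set.mem_Icc]
  intro i
  have h1 : |z i| ≤ (k : ℤ) :=
    le_trans (Finset.single_le_sum (fun i _ => abs_nonneg (z i)) (Finset.mem_univ i)) hz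
  constructor
  · linarith [neg_abs_le (z i)]
  · linarith [le_abs_self (z i)]

lemma quot_surj {k : ℕ} {N : AddSubgroup (Fin n → ℤ)}
    (h : ∀ y : Fin n → ℤ, ∃ z : Fin n → ℤ, y - z ∈ N ∧ (∑ i, |z i|) ≤ (k : ℤ)) :
    Function.Surjective (fun z : {z : Fin n → ℤ | (∑ i, |z i|) ≤ (k : ℤ)} =>
      (QuotientAddGroup.mk z.1 : (Fin n → ℤ) ⧸ N)) := by
  intro q
  induction q using QuotientAddGroup.induction_on with
  | H y =>
    obtain ⟨z, hz1, hz2⟩ := h y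
    exact ⟨⟨z, hz2⟩, QuotientAddGroup.eq.mpr (by rwa [neg_add_eq_sub])⟩

lemma quot_finite {k : ℕ} {N : AddSubgroup (Fin n → ℤ)}
    (h : ∀ y : Fin n → ℤ, ∃ z : Fin n → ℤ, y - z ∈ N ∧ (∑ i, |z i|) ≤ (k : ℤ)) :
    Finite ((Fin n → ℤ) ⧸ N) := by
  haveI := (ball_finite n k).to_subtype
  exact Finite.of_surjective _ (quot_surj h)

lemma index_le {k : ℕ} {N : AddSubgroup (Fin n → ℤ)}
    (h : ∀ y : Fin n → ℤ, ∃ z : Fin n → ℤ, y - z ∈ N ∧ (∑ i, |z i|) ≤ (k : ℤ)) :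
    N.index ≤ Nat.card {z : Fin n → ℤ | (∑ i, |z i|) ≤ (k : ℤ)} := by
  haveI := (ball_finite n k).to_subtype
  exact Nat.card_le_card_of_surjective _ (quot_surj h)

lemma S_finite (n k : ℕ) :
    {N : AddSubgroup (Fin n → ℤ) | N.FiniteIndex ∧
      ∀ y : Fin n → ℤ, ∃ z : Fin n → ℤ, y - z ∈ N ∧ (∑ i, |z i|) ≤ (k : ℤ)}.Finite := by
  classical
  set S := {N : AddSubgroup (Fin n → ℤ) | N.FiniteIndex ∧
      ∀ y : Fin n → ℤ, ∃ z : Fin n → ℤ, y - z ∈ N ∧ (∑ i, |z i|) ≤ (k : ℤ)} with hS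
  set B := Nat.card {z : Fin n → ℤ | (∑ i, |z i|) ≤ (k : ℤ)} with hB
  set M := B.factorial with hM
  haveI : NeZero M := ⟨Nat.factorial_ne_zero B⟩
  set π : (Fin n → ℤ) →+ (Fin n → ZMod M) :=
    AddMonoidHom.mk' (fun x i => ((x i : ℤ) : ZMod M))
      (by intro x y; funext i; simp) with hπ
  have hker : ∀ N ∈ S, ∀ x : Fin n → ℤ, π x = 0 → x ∈ N := by
    intro N hN x hx
    obtain ⟨hNfi, hNdiam⟩ := hN
    have hdvd : ∀ i, (M : ℤ) ∣ x i := by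
      intro i
      have h0 : ((x i : ℤ) : ZMod M) = (0 : ZMod M) := congrFun hx i
      rwa [ZMod.intCast_zmod_eq_zero_iff_dvd] at h0
    set y : Fin n → ℤ := fun i => x i / (M : ℤ) with hy
    have hxy : x = M • y := by
      funext i
      rw [Pi.smul_apply, hy, nsmul_eq_mul, Int.mul_ediv_cancel' (hdvd i)]
    haveI := hNfi
    have hidx0 : N.index ≠ 0 := hNfi.index_ne_zero
    have hidxle : N.index ≤ B := index_le hNdiam
    obtain ⟨m, hm⟩ := Nat.dvd_factorial (Nat.pos_of_ne_zero hidx0) hidxle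
    rw [hxy]
    have hMm : M = N.index * m := by rw [hM, hm]
    rw [hMm, mul_nsmul]
    exact AddSubgroup.nsmul_mem N (AddSubgroup.nsmul_index_mem N y) m
  apply Set.Finite.of_finite_image (f := fun N : AddSubgroup (Fin n → ℤ) => π '' (N : Set _))
  · exact Set.toFinite _
  · intro N1 h1 N2 h2 heq
    have key : ∀ (N N' : AddSubgroup (Fin n → ℤ)), N ∈ S → N' ∈ S →
        π '' (N : Set _) = π '' (N' : Set _) → ∀ x, x ∈ N → x ∈ N' := by
      intro N N' _ hN' heq' x hx
      have : π x ∈ π '' (N' : Set _) := heq' ▸ Set.mem_image_of_mem _ hx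
      obtain ⟨w, hw, hwx⟩ := this
      have hsub : π (x - w) = 0 := by rw [map_sub, hwx, sub_self]
      have := hker N' hN' _ hsub
      have := N'.add_mem this hw
      rwa [sub_add_cancel] at this
    ext x
    exact ⟨key N1 N2 h1 h2 heq x, key N2 N1 h2 h1 heq.symm x⟩

end Stmt0Aux


/-- For every positive integer `n` there exist a constant `c > 0` and a
threshold `k₀` such that for every integer `k ≥ k₀`, the number of finite-index subgroups
`N` of `ℤⁿ` with `diam(ℤⁿ/N) ≤ k` (every coset of `N` contains a vector of ℓ¹-norm
at most `k`) is at least `c · k ^ (n²)`. -/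
theorem stmt0 (n : ℕ) (hn : 0 < n) :
    ∃ c : ℝ, 0 < c ∧ ∃ k₀ : ℕ, ∀ k : ℕ, k₀ ≤ k →
      c * (k : ℝ) ^ (n ^ 2) ≤
        (({N : AddSubgroup (Fin n → ℤ) | N.FiniteIndex ∧
            ∀ y : Fin n → ℤ, ∃ z : Fin n → ℤ, y - z ∈ N ∧ (∑ i, |z i|) ≤ (k : ℤ)}.ncard : ℝ)) := by
  classical
  have hnR : (0 : ℝ) < (n : ℝ) := by exact_mod_cast hn
  refine ⟨(16 * (n : ℝ) ^ 2)⁻¹ ^ (n ^ 2), by positivity, 16 * n ^ 2, ?_⟩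
  intro k hk
  set S := {N : AddSubgroup (Fin n → ℤ) | N.FiniteIndex ∧
      ∀ y : Fin n → ℤ, ∃ z : Fin n → ℤ, y - z ∈ N ∧ (∑ i, |z i|) ≤ (k : ℤ)} with hSdef
  set a : ℕ := k / (8 * n ^ 2) with hadef
  have h8 : 0 < 8 * n ^ 2 := by positivity
  have h816 : 8 * n ^ 2 ≤ 16 * n ^ 2 := Nat.mul_le_mul_right _ (by norm_num)
  have ha1 : 1 ≤ a := (Nat.one_le_div_iff h8).2 (le_trans h816 hk)
  have hak : 8 * n ^ 2 * a ≤ k := by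
    rw [hadef, mul_comm]
    exact Nat.div_mul_le_self k _
  have hka : k ≤ 16 * n ^ 2 * a := by
    have h1 := Nat.div_add_mod k (8 * n ^ 2)
    have h2 : k % (8 * n ^ 2) < 8 * n ^ 2 := Nat.mod_lt _ h8
    have h3 : 8 * n ^ 2 ≤ 8 * n ^ 2 * a := by
      conv_lhs => rw [← Nat.mul_one (8 * n ^ 2)]
      exact Nat.mul_le_mul_left _ ha1
    calc k = 8 * n ^ 2 * a + k % (8 * n ^ 2) := h1.symm
      _ ≤ 8 * n ^ 2 * a + 8 * n ^ 2 * a := by omega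
      _ = 16 * n ^ 2 * a := by ring
  -- the injection
  set e : (Fin n → Fin n → Fin a) → AddSubgroup (Fin n → ℤ) :=
    fun A => Stmt0Aux.latt (4 * (n : ℤ) * (a : ℤ)) (fun i j => ((A i j : ℕ) : ℤ)) with hedef
  have haZ : (1 : ℤ) ≤ (a : ℤ) := by exact_mod_cast ha1
  have hnZ : (1 : ℤ) ≤ (n : ℤ) := by exact_mod_cast hn
  have hbounds : ∀ (A : Fin n → Fin n → Fin a) (i j : Fin n),
      0 ≤ ((A i j : ℕ) : ℤ) ∧ ((A i j : ℕ) : ℤ) < (a : ℤ) := by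
    intro A i j
    exact ⟨Int.ofNat_nonneg _, by exact_mod_cast (A i j).2⟩
  have hdiam : ∀ A : Fin n → Fin n → Fin a, ∀ y : Fin n → ℤ,
      ∃ z : Fin n → ℤ, y - z ∈ e A ∧ (∑ i, |z i|) ≤ (k : ℤ) := by
    intro A y
    have hD : (n : ℤ) * (a : ℤ) ≤ 4 * (n : ℤ) * (a : ℤ) := by nlinarith
    obtain ⟨z, hz1, hz2⟩ := Stmt0Aux.diam (a : ℤ) (4 * (n : ℤ) * (a : ℤ)) haZ hD (hbounds A) y
    refine ⟨z, hz1, le_trans hz2 ?_⟩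
    have hkZ : ((8 * n ^ 2 * a : ℕ) : ℤ) ≤ (k : ℤ) := by exact_mod_cast hak
    push_cast at hkZ ⊢
    have key : (0 : ℤ) ≤ (n : ℤ) * (a : ℤ) * (4 * (n : ℤ) - 1) :=
      mul_nonneg (mul_nonneg (by linarith) (by linarith)) (by linarith)
    nlinarith
  have hrange : Set.range e ⊆ S := by
    rintro _ ⟨A, rfl⟩
    refine ⟨?_, hdiam A⟩
    haveI := Stmt0Aux.quot_finite (hdiam A)
    exact AddSubgroup.finiteIndex_of_finite_quotient
  have hinj : Function.Injective e := by
    intro A A' hAA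
    have := Stmt0Aux.latt_inj (a : ℤ) haZ (hbounds A) (hbounds A') hAA
    funext i j
    have h2 : ((A i j : ℕ) : ℤ) = ((A' i j : ℕ) : ℤ) := congrFun (congrFun this i) j
    exact Fin.ext (by exact_mod_cast h2)
  -- counting
  have hfin : S.Finite := Stmt0Aux.S_finite n k
  have h1 : (Set.range e).ncard ≤ S.ncard := Set.ncard_le_ncard hrange hfin
  have h2 : (Set.range e).ncard = a ^ (n ^ 2) := by
    rw [← Nat.card_coe_set_eq, Nat.card_range_of_injective hinj,
      Nat.card_eq_fintype_card]
    simp only [Fintype.card_fun, Fintype.card_fin]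
    rw [← pow_mul, ← pow_two]
  have hcast : ((a : ℝ)) ^ (n ^ 2) ≤ (S.ncard : ℝ) := by
    exact_mod_cast h2 ▸ h1
  refine le_trans ?_ hcast
  rw [← mul_pow]
  refine pow_le_pow_left₀ (by positivity) ?_ _
  rw [inv_mul_le_iff₀ (by positivity)]
  calc (k : ℝ) ≤ ((16 * n ^ 2 * a : ℕ) : ℝ) := by exact_mod_cast hka
    _ = 16 * (n : ℝ) ^ 2 * (a : ℝ) := by push_cast; ring
end

section
/- Let n ≥ 1 be an integer and k > 0. Suppose x₁,…,xₙ and x′₁,…,x′ₙ are vectors in ℤⁿ satisfying k/(2n) < x_{ii} ≤ k/n and |x_{ij}| ≤ k/(2n²) for all i ≠ j (and the same inequalities for the x′ᵢ), where xᵢ = (x_{i1},…,x_{in}). If the subgroup of ℤⁿ generated by x₁,…,xₙ equals the subgroup generated by x′₁,…,x′ₙ, then xᵢ = x′ᵢ for every i. -/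
/-- Key lemma: if `w` is a nonzero integer combination of the `x j`, and `w` is "small"
(`|w i| < k/(2n)` and `|w j| ≤ k/n²` for `j ≠ i`), then `w i` is within `(n-1)·k/(2n²)`
of `± x i i`. -/
lemma stmt1_key (n : ℕ) (hn : 1 ≤ n) (k : ℝ) (hk : 0 < k)
    (x : Fin n → (Fin n → ℤ))
    (hdiag : ∀ i : Fin n, k / (2 * n) < (x i i : ℝ) ∧ (x i i : ℝ) ≤ k / n)
    (hoff : ∀ i j : Fin n, i ≠ j → |(x i j : ℝ)| ≤ k / (2 * n ^ 2))
    (i : Fin n) (w c : Fin n → ℤ)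
    (hc : ∀ p : Fin n, (∑ j, (c j : ℝ) * (x j p : ℝ)) = (w p : ℝ))
    (hw0 : w ≠ 0)
    (hwi : |(w i : ℝ)| < k / (2 * n))
    (hwj : ∀ j : Fin n, j ≠ i → |(w j : ℝ)| ≤ k / n ^ 2) :
    ((x i i : ℝ) - ((n : ℝ) - 1) * (k / (2 * n ^ 2)) ≤ (w i : ℝ)) ∨
      ((w i : ℝ) ≤ -(x i i : ℝ) + ((n : ℝ) - 1) * (k / (2 * n ^ 2))) := by
  set A : ℝ := k / (2 * n ^ 2) with hAdef
  have hN : (1 : ℝ) ≤ (n : ℝ) := by exact_mod_cast hn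
  have hNpos : (0 : ℝ) < (n : ℝ) := by linarith
  have hA : 0 < A := by rw [hAdef]; positivity
  have hnA : (n : ℝ) * A = k / (2 * n) := by rw [hAdef]; field_simp
  have h2A : (2 : ℝ) * A = k / n ^ 2 := by rw [hAdef]; field_simp
  have hdiagA : ∀ p : Fin n, (n : ℝ) * A < (x p p : ℝ) ∧ (x p p : ℝ) ≤ 2 * ((n:ℝ) * A) := by
    intro p
    have h := hdiag p
    have h2 : k / n = 2 * (k / (2 * n)) := by field_simp
    exact ⟨by rw [hnA]; exact h.1, by rw [hnA]; linarith [h.2]⟩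
  have hoffA : ∀ p q : Fin n, p ≠ q → |(x p q : ℝ)| ≤ A := fun p q h => hoff p q h
  have hwiA : |(w i : ℝ)| < (n : ℝ) * A := by rw [hnA]; exact hwi
  have hwjA : ∀ j : Fin n, j ≠ i → |(w j : ℝ)| ≤ 2 * A := by
    intro j hj; rw [h2A]; exact hwj j hj
  have hc0 : c ≠ 0 := by
    intro h
    apply hw0
    funext p
    have h1 := hc p
    rw [h] at h1
    simp at h1
    exact_mod_cast h1.symm
  have hune : (Finset.univ : Finset (Fin n)).Nonempty := ⟨i, Finset.mem_univ i⟩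
  obtain ⟨j0, -, hj0⟩ := Finset.exists_mem_eq_sup' hune fun j => |c j|
  set m : ℤ := Finset.univ.sup' hune fun j => |c j| with hmdef
  have hle : ∀ j, |c j| ≤ m := fun j => Finset.le_sup' (fun j => |c j|) (Finset.mem_univ j)
  have hm1 : 1 ≤ m := by
    obtain ⟨p, hp⟩ := Function.ne_iff.mp hc0
    calc (1 : ℤ) ≤ |c p| := Int.one_le_abs (by simpa using hp)
    _ ≤ m := hle p
  have hm1R : (1 : ℝ) ≤ (m : ℝ) := by exact_mod_cast hm1
  -- the basic coordinate estimate
  have est : ∀ p : Fin n, (|(c p : ℝ)|) * (x p p : ℝ) ≤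
      |(w p : ℝ)| + (∑ j ∈ Finset.univ.erase p, |(c j : ℝ)|) * A := by
    intro p
    have h1 : (c p : ℝ) * (x p p : ℝ) + ∑ j ∈ Finset.univ.erase p, (c j : ℝ) * (x j p : ℝ)
        = (w p : ℝ) := by
      rw [← hc p]
      exact Finset.add_sum_erase Finset.univ (fun j => (c j : ℝ) * (x j p : ℝ))
        (Finset.mem_univ p)
    have h2 : (c p : ℝ) * (x p p : ℝ)
        = (w p : ℝ) - ∑ j ∈ Finset.univ.erase p, (c j : ℝ) * (x j p : ℝ) := by
      linarith [h1]
    have h3 : |(c p : ℝ) * (x p p : ℝ)| ≤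
        |(w p : ℝ)| + ∑ j ∈ Finset.univ.erase p, |(c j : ℝ)| * A := by
      rw [h2]
      refine (abs_sub _ _).trans ?_
      gcongr
      refine (Finset.abs_sum_le_sum_abs _ _).trans ?_
      apply Finset.sum_le_sum
      intro j hj
      rw [abs_mul]
      exact mul_le_mul_of_nonneg_left (hoffA j p (Finset.ne_of_mem_erase hj)) (abs_nonneg _)
    have hxpos : (0:ℝ) < (x p p : ℝ) :=
      lt_trans (by positivity : (0:ℝ) < (n:ℝ) * A) (hdiagA p).1
    have h4 : |(c p : ℝ) * (x p p : ℝ)| = |(c p : ℝ)| * (x p p : ℝ) := by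
      rw [abs_mul, abs_of_pos hxpos]
    rw [h4] at h3
    rw [Finset.sum_mul]
    exact h3
  have hcard : ∀ p : Fin n, ((Finset.univ.erase p).card : ℝ) = (n : ℝ) - 1 := by
    intro p
    rw [Finset.card_erase_of_mem (Finset.mem_univ p)]
    simp only [Finset.card_univ, Fintype.card_fin]
    rw [Nat.cast_sub hn]
    simp
  have hsum : ∀ (p : Fin n) (M : ℝ), (∀ j ∈ Finset.univ.erase p, |(c j : ℝ)| ≤ M) →
      (∑ j ∈ Finset.univ.erase p, |(c j : ℝ)|) ≤ ((n : ℝ) - 1) * M := by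
    intro p M hM
    calc (∑ j ∈ Finset.univ.erase p, |(c j : ℝ)|) ≤ ∑ _j ∈ Finset.univ.erase p, M :=
          Finset.sum_le_sum hM
    _ = ((Finset.univ.erase p).card : ℝ) * M := by rw [Finset.sum_const, nsmul_eq_mul]
    _ = ((n : ℝ) - 1) * M := by rw [hcard p]
  have hmle : ∀ j, (|(c j : ℝ)|) ≤ (m : ℝ) := by intro j; exact_mod_cast hle j
  by_cases H : ∃ j1 : Fin n, j1 ≠ i ∧ |c j1| = m
  · obtain ⟨j1, hj1i, hj1⟩ := H
    -- Step: m = 1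
    have e1 := est j1
    have s1 : (∑ j ∈ Finset.univ.erase j1, |(c j : ℝ)|) ≤ ((n : ℝ) - 1) * (m : ℝ) :=
      hsum j1 (m : ℝ) (fun j _ => hmle j)
    have hcj1 : |(c j1 : ℝ)| = (m : ℝ) := by
      rw [← Int.cast_abs, hj1]
    have hxj1 := (hdiagA j1).1
    have hwj1 := hwjA j1 hj1i
    rw [hcj1] at e1
    have hm2 : (m : ℝ) < 2 := by
      nlinarith [mul_le_mul_of_nonneg_right s1 hA.le,
        mul_lt_mul_of_pos_left hxj1 (show (0:ℝ) < (m:ℝ) by linarith)]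
    have hm2' : m < 2 := by exact_mod_cast hm2
    have hmeq : m = 1 := by omega
    -- Step: all coefficients nonzero
    have hall : ∀ l, c l ≠ 0 := by
      by_contra hcon
      push_neg at hcon
      obtain ⟨l0, hl0⟩ := hcon
      have hl0j1 : l0 ≠ j1 := by
        intro h
        subst h
        rw [hl0] at hj1
        simp at hj1
        omega
      have hn2 : 2 ≤ n := by
        have : Nontrivial (Fin n) := ⟨j1, i, hj1i⟩
        have := Fintype.one_lt_card (α := Fin n)
        simp at this; omega
      have hmem : l0 ∈ Finset.univ.erase j1 := Finset.mem_erase.mpr ⟨hl0j1, Finset.mem_univ l0⟩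
      have s2 : (∑ j ∈ Finset.univ.erase j1, |(c j : ℝ)|) ≤ ((n : ℝ) - 2) := by
        have heq : (∑ j ∈ Finset.univ.erase j1, |(c j : ℝ)|)
            = ∑ j ∈ (Finset.univ.erase j1).erase l0, |(c j : ℝ)| :=
          (Finset.sum_erase (f := fun j => |(c j : ℝ)|) (Finset.univ.erase j1)
            (by simp [hl0])).symm
        rw [heq]
        calc ∑ j ∈ (Finset.univ.erase j1).erase l0, |(c j : ℝ)|
            ≤ ∑ _j ∈ (Finset.univ.erase j1).erase l0, (1:ℝ) := by
              apply Finset.sum_le_sum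
              intro j _
              have := hmle j
              rw [hmeq] at this
              exact_mod_cast this
        _ = (((Finset.univ.erase j1).erase l0).card : ℝ) := by
              rw [Finset.sum_const, nsmul_eq_mul, mul_one]
        _ = ((n : ℝ) - 2) := by
              rw [Finset.card_erase_of_mem hmem, Finset.card_erase_of_mem (Finset.mem_univ j1)]
              simp only [Finset.card_univ, Fintype.card_fin]
              have h9 : n - 1 - 1 = n - 2 := by omega
              rw [h9, Nat.cast_sub hn2]
              push_cast
              ring
      rw [hmeq] at e1
      simp only [Int.cast_one, one_mul] at e1
      have : (∑ j ∈ Finset.univ.erase j1, |(c j : ℝ)|) * A ≤ ((n : ℝ) - 2) * A :=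
        mul_le_mul_of_nonneg_right s2 hA.le
      nlinarith
    -- Step: c i = ± 1, and conclude
    have hci1 : c i = 1 ∨ c i = -1 := by
      have h1 : |c i| ≤ 1 := hmeq ▸ hle i
      have h1' := abs_le.mp h1
      have h2 := hall i
      omega
    have h1 : (c i : ℝ) * (x i i : ℝ) + ∑ j ∈ Finset.univ.erase i, (c j : ℝ) * (x j i : ℝ)
        = (w i : ℝ) := by
      rw [← hc i]
      exact Finset.add_sum_erase Finset.univ (fun j => (c j : ℝ) * (x j i : ℝ))
        (Finset.mem_univ i)
    have hr : |∑ j ∈ Finset.univ.erase i, (c j : ℝ) * (x j i : ℝ)| ≤ ((n:ℝ) - 1) * A := by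
      refine (Finset.abs_sum_le_sum_abs _ _).trans ?_
      have step : ∀ j ∈ Finset.univ.erase i, |(c j : ℝ) * (x j i : ℝ)| ≤ 1 * A := by
        intro j hj
        rw [abs_mul]
        have h2 := hmle j
        rw [hmeq] at h2
        have h3 := hoffA j i (Finset.ne_of_mem_erase hj)
        have h4 : |(c j : ℝ)| ≤ 1 := by exact_mod_cast h2
        have := abs_nonneg ((x j i : ℝ))
        nlinarith
      calc ∑ j ∈ Finset.univ.erase i, |(c j : ℝ) * (x j i : ℝ)|
          ≤ ∑ _j ∈ Finset.univ.erase i, 1 * A := Finset.sum_le_sum step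
      _ = ((Finset.univ.erase i).card : ℝ) * (1 * A) := by rw [Finset.sum_const, nsmul_eq_mul]
      _ = ((n:ℝ) - 1) * A := by rw [hcard i]; ring
    have hr' := abs_le.mp hr
    rcases hci1 with h | h
    · left
      rw [h] at h1
      push_cast at h1
      linarith [h1, hr'.1]
    · right
      rw [h] at h1
      push_cast at h1
      linarith [h1, hr'.2]
  · -- max attained only at i: contradiction
    push_neg at H
    have hci : |c i| = m := by
      rcases eq_or_ne j0 i with rfl | hne
      · exact hj0.symm
      · exact absurd hj0.symm (H j0 hne)
    have hoffm : ∀ j ∈ Finset.univ.erase i, |(c j : ℝ)| ≤ (m : ℝ) - 1 := by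
      intro j hj
      have hji : j ≠ i := Finset.ne_of_mem_erase hj
      have h2 : |c j| ≤ m - 1 := by
        have := H j hji
        have := hle j
        omega
      calc |(c j : ℝ)| = ((|c j| : ℤ) : ℝ) := by push_cast; ring
      _ ≤ ((m - 1 : ℤ) : ℝ) := by exact_mod_cast h2
      _ = (m : ℝ) - 1 := by push_cast; ring
    have e1 := est i
    have s1 := hsum i ((m : ℝ) - 1) hoffm
    have hcabs : |(c i : ℝ)| = (m : ℝ) := by rw [← Int.cast_abs, hci]
    rw [hcabs] at e1
    have hxii := (hdiagA i).1
    exfalso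
    nlinarith [mul_le_mul_of_nonneg_right s1 hA.le,
      mul_lt_mul_of_pos_left hxii (show (0:ℝ) < (m:ℝ) by linarith)]

/-- Let `n ≥ 1` and `k > 0`. If `x₁,…,xₙ` and `x′₁,…,x′ₙ` are vectors in `ℤⁿ`
with `k/(2n) < x_{ii} ≤ k/n` and `|x_{ij}| ≤ k/(2n²)` for `i ≠ j` (and likewise for the
`x′ᵢ`), and if they generate the same subgroup of `ℤⁿ`, then `xᵢ = x′ᵢ` for every `i`. -/
theorem stmt1 (n : ℕ) (hn : 1 ≤ n) (k : ℝ) (hk : 0 < k)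
    (x x' : Fin n → (Fin n → ℤ))
    (hxdiag : ∀ i : Fin n, k / (2 * n) < (x i i : ℝ) ∧ (x i i : ℝ) ≤ k / n)
    (hxoff : ∀ i j : Fin n, i ≠ j → |(x i j : ℝ)| ≤ k / (2 * n ^ 2))
    (hx'diag : ∀ i : Fin n, k / (2 * n) < (x' i i : ℝ) ∧ (x' i i : ℝ) ≤ k / n)
    (hx'off : ∀ i j : Fin n, i ≠ j → |(x' i j : ℝ)| ≤ k / (2 * n ^ 2))
    (hgen : AddSubgroup.closure (Set.range x) = AddSubgroup.closure (Set.range x')) :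
    x = x' := by
  have hN : (1 : ℝ) ≤ (n : ℝ) := by exact_mod_cast hn
  have hNpos : (0 : ℝ) < (n : ℝ) := by linarith
  have hA : (0:ℝ) < k / (2 * n ^ 2) := by positivity
  have hBA : ((n:ℝ) - 1) * (k / (2 * n ^ 2)) + (k / (2 * n ^ 2)) = k / (2 * n) := by
    field_simp; ring
  have hkn : k / n = 2 * (k / (2 * n)) := by field_simp
  have hkn2 : k / n ^ 2 = 2 * (k / (2 * n ^ 2)) := by field_simp
  funext i
  by_contra hne
  set w : Fin n → ℤ := x' i - x i with hw
  have hx'mem : x' i ∈ AddSubgroup.closure (Set.range x) := by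
    rw [hgen]; exact AddSubgroup.subset_closure ⟨i, rfl⟩
  have hxmem : x i ∈ AddSubgroup.closure (Set.range x) :=
    AddSubgroup.subset_closure ⟨i, rfl⟩
  have hxmem' : x i ∈ AddSubgroup.closure (Set.range x') := by
    rw [← hgen]; exact hxmem
  have hx'mem' : x' i ∈ AddSubgroup.closure (Set.range x') :=
    AddSubgroup.subset_closure ⟨i, rfl⟩
  have hwmem : w ∈ AddSubgroup.closure (Set.range x) := sub_mem hx'mem hxmem
  have hwmem' : -w ∈ AddSubgroup.closure (Set.range x') := by
    have hrw : -w = x i - x' i := by rw [hw]; abel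
    rw [hrw]
    exact sub_mem hxmem' hx'mem'
  rw [← Submodule.span_int_eq_addSubgroupClosure, Submodule.mem_toAddSubgroup,
    Submodule.mem_span_range_iff_exists_fun] at hwmem hwmem'
  obtain ⟨c, hcx⟩ := hwmem
  obtain ⟨c', hcx'⟩ := hwmem'
  have hc : ∀ p : Fin n, (∑ j, (c j : ℝ) * (x j p : ℝ)) = (w p : ℝ) := by
    intro p
    have h := congrFun hcx p
    simp only [Finset.sum_apply, Pi.smul_apply, smul_eq_mul] at h
    exact_mod_cast h
  have hc' : ∀ p : Fin n, (∑ j, (c' j : ℝ) * (x' j p : ℝ)) = ((-w) p : ℝ) := by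
    intro p
    have h := congrFun hcx' p
    simp only [Finset.sum_apply, Pi.smul_apply, smul_eq_mul] at h
    exact_mod_cast h
  have hw0 : w ≠ 0 := by
    intro h
    exact hne (sub_eq_zero.mp h).symm
  have hw0' : -w ≠ 0 := neg_ne_zero.mpr hw0
  have hwrel : (w i : ℝ) = (x' i i : ℝ) - (x i i : ℝ) := by
    rw [hw]; push_cast [Pi.sub_apply]; ring
  have hwrelj : ∀ j : Fin n, (w j : ℝ) = (x' i j : ℝ) - (x i j : ℝ) := by
    intro j; rw [hw]; push_cast [Pi.sub_apply]; ring
  have hwi : |(w i : ℝ)| < k / (2 * n) := by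
    rw [hwrel, abs_lt]
    constructor <;> linarith [(hxdiag i).1, (hxdiag i).2, (hx'diag i).1, (hx'diag i).2]
  have hwj : ∀ j : Fin n, j ≠ i → |(w j : ℝ)| ≤ k / n ^ 2 := by
    intro j hj
    rw [hwrelj j]
    have h1 := hxoff i j (Ne.symm hj)
    have h2 := hx'off i j (Ne.symm hj)
    calc |(x' i j : ℝ) - (x i j : ℝ)| ≤ |(x' i j : ℝ)| + |(x i j : ℝ)| := abs_sub _ _
    _ ≤ k / n ^ 2 := by linarith
  have hwi' : |((-w) i : ℝ)| < k / (2 * n) := by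
    have : ((-w) i : ℝ) = -(w i : ℝ) := by push_cast [Pi.neg_apply]; ring
    rw [this, abs_neg]; exact hwi
  have hwj' : ∀ j : Fin n, j ≠ i → |((-w) j : ℝ)| ≤ k / n ^ 2 := by
    intro j hj
    have : ((-w) j : ℝ) = -(w j : ℝ) := by push_cast [Pi.neg_apply]; ring
    rw [this, abs_neg]; exact hwj j hj
  have k1 := stmt1_key n hn k hk x hxdiag hxoff i w c hc hw0 hwi hwj
  have k2 := stmt1_key n hn k hk x' hx'diag hx'off i (-w) c' hc' hw0' hwi' hwj'
  have hnegwi : ((-w) i : ℝ) = -(w i : ℝ) := by push_cast [Pi.neg_apply]; ring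
  rw [hnegwi] at k2
  rcases k1 with h1 | h1 <;> rcases k2 with h2 | h2 <;>
    [ (nlinarith [(hxdiag i).1, (hx'diag i).1, hwrel]);
      (nlinarith [(hxdiag i).1, (hx'diag i).1, hwrel]);
      (nlinarith [(hxdiag i).1, (hx'diag i).1, hwrel]);
      (nlinarith [(hxdiag i).1, (hx'diag i).1, hwrel]) ]
end

section
/- Let n ≥ 1 be an integer and k > 0. Suppose x₁,…,xₙ are vectors in ℤⁿ satisfying k/(2n) < x_{ii} ≤ k/n and |x_{ij}| ≤ k/(2n²) for all i ≠ j, where xᵢ = (x_{i1},…,x_{in}), and let N be the subgroup of ℤⁿ generated by x₁,…,xₙ. Then for every y ∈ ℤⁿ there exists z ∈ ℤⁿ with y − z ∈ N and ‖z‖₁ ≤ k, i.e. diam(ℤⁿ/N) ≤ k in the ℓ¹ word metric. -/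
/-- Let `n ≥ 1` and `k > 0`. If `x₁,…,xₙ` are vectors in `ℤⁿ` with
`k/(2n) < x_{ii} ≤ k/n` and `|x_{ij}| ≤ k/(2n²)` for `i ≠ j`, and `N` is the subgroup they
generate, then every coset of `N` in `ℤⁿ` contains a vector of ℓ¹-norm at most `k`,
i.e. `diam(ℤⁿ/N) ≤ k` in the ℓ¹ word metric. -/
theorem stmt2 (n : ℕ) (hn : 1 ≤ n) (k : ℝ) (hk : 0 < k)
    (x : Fin n → (Fin n → ℤ))
    (hxdiag : ∀ i : Fin n, k / (2 * n) < (x i i : ℝ) ∧ (x i i : ℝ) ≤ k / n)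
    (hxoff : ∀ i j : Fin n, i ≠ j → |(x i j : ℝ)| ≤ k / (2 * n ^ 2))
    (N : AddSubgroup (Fin n → ℤ)) (hN : N = AddSubgroup.closure (Set.range x)) :
    ∀ y : Fin n → ℤ, ∃ z : Fin n → ℤ, y - z ∈ N ∧ ((∑ i, |z i| : ℤ) : ℝ) ≤ k := by
  have hn0 : (0:ℝ) < n := by
    have : (1:ℝ) ≤ n := by exact_mod_cast hn
    linarith
  -- each generator is in N
  have hgen : ∀ i, x i ∈ N := by
    intro i
    rw [hN]
    exact AddSubgroup.subset_closure ⟨i, rfl⟩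
  have key : ∀ m : ℕ, ∀ y : Fin n → ℤ, (∑ i, |y i|) ≤ (m:ℤ) →
      ∃ z : Fin n → ℤ, y - z ∈ N ∧ ((∑ i, |z i| : ℤ) : ℝ) ≤ k := by
    intro m
    induction m with
    | zero =>
      intro y hy
      refine ⟨y, by simpa using N.zero_mem, ?_⟩
      have h0 : (0:ℤ) ≤ ∑ i, |y i| := Finset.sum_nonneg fun i _ => abs_nonneg _
      have : (∑ i, |y i|) = 0 := le_antisymm (by exact_mod_cast hy) h0
      rw [this]
      simpa using hk.le
    | succ m ih =>
      intro y hy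
      by_cases hle : ((∑ i, |y i| : ℤ) : ℝ) ≤ k
      · exact ⟨y, by simpa using N.zero_mem, hle⟩
      push_neg at hle
      -- there is a coordinate with |y i| > k / n
      obtain ⟨i, -, hi⟩ : ∃ i ∈ Finset.univ, k / n < ((|y i| : ℤ) : ℝ) := by
        apply Finset.exists_lt_of_sum_lt
        have : ∑ _i : Fin n, k / n = k := by
          rw [Finset.sum_const, Finset.card_univ, Fintype.card_fin, nsmul_eq_mul]
          field_simp
        rw [this]
        calc k < ((∑ i, |y i| : ℤ) : ℝ) := hle
          _ = ∑ i, ((|y i| : ℤ) : ℝ) := by push_cast; ring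
      set s : ℤ := if 0 ≤ y i then 1 else -1 with hs
      set y' : Fin n → ℤ := y - s • x i with hy'
      -- diagonal entry facts
      have hxiiR : k / (2 * n) < ((x i i : ℤ) : ℝ) := (hxdiag i).1
      have hxii_pos : 0 < x i i := by
        have : (0:ℝ) < ((x i i : ℤ) : ℝ) := lt_trans (by positivity) hxiiR
        exact_mod_cast this
      have hxii_le : x i i ≤ |y i| := by
        have : ((x i i : ℤ) : ℝ) ≤ ((|y i| : ℤ) : ℝ) := le_of_lt (lt_of_le_of_lt (hxdiag i).2 hi)
        exact_mod_cast this
      -- claim A : |y i - s * x i i| = |y i| - x i i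
      have hA : |y i - s * x i i| = |y i| - x i i := by
        by_cases hyi : 0 ≤ y i
        · have hs1 : s = 1 := by simp [hs, hyi]
          rw [hs1, one_mul]
          rw [abs_of_nonneg hyi] at hxii_le ⊢
          rw [abs_of_nonneg (by omega)]
        · have hs1 : s = -1 := by simp [hs, hyi]
          push_neg at hyi
          rw [hs1]
          rw [abs_of_neg hyi] at hxii_le ⊢
          have : y i - (-1) * x i i = -(-(y i) - x i i) := by ring
          rw [this, abs_neg, abs_of_nonneg (by omega)]
      -- off diagonal sum bound
      have hoff : ∑ j ∈ Finset.univ.erase i, |x i j| < x i i := by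
        have hR : (∑ j ∈ Finset.univ.erase i, ((|x i j| : ℤ) : ℝ)) < ((x i i : ℤ) : ℝ) := by
          have h1 : ∑ j ∈ Finset.univ.erase i, ((|x i j| : ℤ) : ℝ)
              ≤ (Finset.univ.erase i).card • (k / (2 * n ^ 2)) := by
            apply Finset.sum_le_card_nsmul
            intro j hj
            have hji : j ≠ i := Finset.ne_of_mem_erase hj
            have := hxoff i j (Ne.symm hji)
            push_cast
            exact this
          have hcard : (Finset.univ.erase i).card ≤ n := by
            calc (Finset.univ.erase i).card ≤ (Finset.univ : Finset (Fin n)).card :=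
                Finset.card_le_card (Finset.erase_subset _ _)
              _ = n := by simp
          have h2 : ((Finset.univ.erase i).card : ℝ) * (k / (2 * n ^ 2)) ≤ k / (2 * n) := by
            rw [mul_div_assoc', div_le_div_iff₀ (by positivity) (by positivity)]
            have hc : ((Finset.univ.erase i).card : ℝ) ≤ n := by exact_mod_cast hcard
            have hmul := mul_le_mul_of_nonneg_right hc (by positivity : (0:ℝ) ≤ k * (2 * n))
            nlinarith [hmul]
          calc ∑ j ∈ Finset.univ.erase i, ((|x i j| : ℤ) : ℝ)
              ≤ (Finset.univ.erase i).card • (k / (2 * n ^ 2)) := h1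
            _ = ((Finset.univ.erase i).card : ℝ) * (k / (2 * n ^ 2)) := by
                rw [nsmul_eq_mul]
            _ ≤ k / (2 * n) := h2
            _ < ((x i i : ℤ) : ℝ) := hxiiR
        have : ((∑ j ∈ Finset.univ.erase i, |x i j| : ℤ) : ℝ) < ((x i i : ℤ) : ℝ) := by
          push_cast
          exact_mod_cast hR
        exact_mod_cast this
      -- norm decrease
      have hdec : (∑ j, |y' j|) ≤ (∑ j, |y j|) - 1 := by
        have hsplit : ∑ j, |y' j| = ∑ j ∈ Finset.univ.erase i, |y' j| + |y' i| :=
          (Finset.sum_erase_add _ _ (Finset.mem_univ i)).symm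
        have hsplit2 : ∑ j, |y j| = ∑ j ∈ Finset.univ.erase i, |y j| + |y i| :=
          (Finset.sum_erase_add _ _ (Finset.mem_univ i)).symm
        have hyi' : |y' i| = |y i| - x i i := by
          simpa [hy', Pi.sub_apply, Pi.smul_apply, smul_eq_mul] using hA
        have hbound : ∀ j ∈ Finset.univ.erase i, |y' j| ≤ |y j| + |x i j| := by
          intro j _
          have : y' j = y j - s * x i j := by simp [hy', Pi.sub_apply, Pi.smul_apply, smul_eq_mul]
          rw [this]
          have habs : |s * x i j| = |x i j| := by
            have : |s| = 1 := by by_cases h : 0 ≤ y i <;> simp [hs, h]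
            rw [abs_mul, this, one_mul]
          calc |y j - s * x i j| ≤ |y j| + |s * x i j| := abs_sub _ _
            _ = |y j| + |x i j| := by rw [habs]
        have hsum : ∑ j ∈ Finset.univ.erase i, |y' j|
            ≤ ∑ j ∈ Finset.univ.erase i, (|y j| + |x i j|) := Finset.sum_le_sum hbound
        rw [hsplit, hsplit2, hyi']
        rw [Finset.sum_add_distrib] at hsum
        omega
      have hy'm : (∑ j, |y' j|) ≤ (m:ℤ) := by
        push_cast at hy ⊢
        omega
      obtain ⟨z, hz1, hz2⟩ := ih y' hy'm
      refine ⟨z, ?_, hz2⟩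
      have : y - z = s • x i + (y' - z) := by
        rw [hy']; abel
      rw [this]
      exact N.add_mem (N.zsmul_mem (hgen i) s) hz1
  intro y
  exact key (∑ i, |y i|).toNat y (by simp [Int.le_toNat, Finset.sum_nonneg fun i _ => abs_nonneg (y i)])
end

section
/- For every n ≥ 1, every finite-index subgroup N of ℤⁿ, every minimal generating tuple (x₁,…,xₙ) of N, and all real numbers a₁,…,aₙ, one has ‖a₁x₁ + … + aₙxₙ‖ ≥ (1/Dₙ)·maxᵢ ‖aᵢxᵢ‖. -/
/-- The constants `Dₙ`, defined recursively by `D₁ = 1` and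
`Dₙ = D_{n−1}² · (4·n²·D_{n−1}³)ⁿ`. -/
noncomputable def Dc : ℕ → ℝ
  | 0 => 1
  | 1 => 1
  | (n + 2) => (Dc (n + 1)) ^ 2 * (4 * ((n + 2 : ℕ) : ℝ) ^ 2 * (Dc (n + 1)) ^ 3) ^ (n + 2)

/-- The canonical embedding of `ℤⁿ` into Euclidean space `ℝⁿ`. -/
def toR {n : ℕ} (x : Fin n → ℤ) : EuclideanSpace ℝ (Fin n) := WithLp.toLp 2 (fun i => (x i : ℝ))

/-- `N ∩ Span_ℝ S = ⟨S⟩`: the elements of `N` lying in the real span of `S`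
are exactly the subgroup generated by `S`. -/
def SpanCond {n : ℕ} (N : AddSubgroup (Fin n → ℤ)) (S : Set (Fin n → ℤ)) : Prop :=
  {y : Fin n → ℤ | y ∈ N ∧ toR y ∈ Submodule.span ℝ (toR '' S)} =
    (AddSubgroup.closure S : Set (Fin n → ℤ))

/-- `(x₁,…,xₙ)` is a minimal generating tuple of `N ≤ ℤⁿ`: each `xᵢ` lies in `N` outside the
subgroup generated by the previous ones, satisfies `N ∩ Span_ℝ{x₁,…,xᵢ} = ⟨x₁,…,xᵢ⟩`, and has
minimal Euclidean norm among all such candidates. -/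
def IsMinGenTuple {n : ℕ} (N : AddSubgroup (Fin n → ℤ)) (x : Fin n → (Fin n → ℤ)) : Prop :=
  ∀ i : Fin n,
    x i ∈ N ∧
    x i ∉ AddSubgroup.closure (x '' {j | j < i}) ∧
    SpanCond N (x '' {j | j ≤ i}) ∧
    ∀ y ∈ N, y ∉ AddSubgroup.closure (x '' {j | j < i}) →
      SpanCond N (insert y (x '' {j | j < i})) → ‖toR (x i)‖ ≤ ‖toR y‖

namespace Stmt3Aux

open Submodule Finset

variable {n : ℕ}

lemma toR_add (a b : Fin n → ℤ) : toR (a + b) = toR a + toR b := by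
  ext i; simp [toR]

noncomputable def toRHom (n : ℕ) : (Fin n → ℤ) →+ EuclideanSpace ℝ (Fin n) where
  toFun := toR
  map_zero' := by ext i; simp [toR]
  map_add' := toR_add

lemma toR_zsmul (c : ℤ) (a : Fin n → ℤ) : toR (c • a) = (c : ℝ) • toR a := by
  ext i; simp [toR]

lemma toR_eq_zero_iff {a : Fin n → ℤ} : toR a = 0 ↔ a = 0 := by
  constructor
  · intro h; funext i
    have := congrArg (fun v => v i) h
    simpa [toR] using this
  · rintro rfl; ext i; simp [toR]

variable {x : Fin n → Fin n → ℤ}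

lemma toR_sum_zsmul (c : Fin n → ℤ) :
    toR (∑ l, c l • x l) = ∑ l, (c l : ℝ) • toR (x l) := by
  rw [show toR (∑ l, c l • x l) = toRHom n (∑ l, c l • x l) from rfl, map_sum]
  refine Finset.sum_congr rfl fun l _ => ?_
  exact toR_zsmul (c l) (x l)

lemma mem_closure_of_support (T : Set (Fin n)) (c : Fin n → ℤ)
    (hc : ∀ l, l ∉ T → c l = 0) : (∑ l, c l • x l) ∈ AddSubgroup.closure (x '' T) := by
  refine AddSubgroup.sum_mem _ fun l _ => ?_
  by_cases hl : l ∈ T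
  · exact AddSubgroup.zsmul_mem _ (AddSubgroup.subset_closure (show x l ∈ x '' T from ⟨l, hl, rfl⟩)) _
  · rw [hc l hl]; simpa using (AddSubgroup.closure (x '' T)).zero_mem

lemma exists_coords_of_mem_closure {T : Set (Fin n)} {w : Fin n → ℤ}
    (hw : w ∈ AddSubgroup.closure (x '' T)) :
    ∃ c : Fin n → ℤ, (∀ l, l ∉ T → c l = 0) ∧ w = ∑ l, c l • x l := by
  classical
  induction hw using AddSubgroup.closure_induction with
  | mem w hw =>
    obtain ⟨l, hl, rfl⟩ := hw
    refine ⟨Pi.single l 1, fun m hm => ?_, ?_⟩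
    · by_cases h : m = l
      · subst h; exact absurd hl hm
      · simp [Pi.single_eq_of_ne h]
    · rw [Finset.sum_eq_single l]
      · simp
      · intro m _ hm; simp [Pi.single_eq_of_ne hm]
      · intro h; exact absurd (Finset.mem_univ l) h
  | zero => exact ⟨0, fun _ _ => rfl, by simp⟩
  | add a b _ _ iha ihb =>
    obtain ⟨c, hc, rfl⟩ := iha
    obtain ⟨d, hd, rfl⟩ := ihb
    exact ⟨c + d, fun l hl => by simp [hc l hl, hd l hl],
      by rw [← Finset.sum_add_distrib]; refine Finset.sum_congr rfl fun l _ => ?_;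
         simp [add_smul, Pi.add_apply]⟩
  | neg a _ iha =>
    obtain ⟨c, hc, rfl⟩ := iha
    exact ⟨-c, fun l hl => by simp [hc l hl], by
      rw [← Finset.sum_neg_distrib]
      refine Finset.sum_congr rfl fun l _ => ?_
      simp [neg_smul, Pi.neg_apply]⟩

end Stmt3Aux


section Part2
open Submodule Finset Stmt3Aux

variable {n : ℕ} {N : AddSubgroup (Fin n → ℤ)} {x : Fin n → Fin n → ℤ}

lemma image_comp_toR (T : Set (Fin n)) :
    toR '' (x '' T) = (fun j => toR (x j)) '' T := Set.image_image _ _ _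

lemma span_trick (hx : IsMinGenTuple N x) {i : Fin n}
    (hmem : toR (x i) ∈ Submodule.span ℝ ((fun j => toR (x j)) '' {j | j < i})) : False := by
  rcases Nat.eq_zero_or_pos i.val with h0 | hpos
  · have hempty : ({j | j < i} : Set (Fin n)) = ∅ := by
      ext j; simp only [Set.mem_setOf_eq, Set.mem_empty_iff_false, iff_false, Fin.lt_def]
      omega
    rw [hempty] at hmem
    simp only [Set.image_empty, Submodule.span_empty, Submodule.mem_bot] at hmem
    have hx0 : x i = 0 := toR_eq_zero_iff.mp hmem
    have := (hx i).2.1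
    rw [hempty] at this
    exact this (by rw [hx0]; simp)
  · set i' : Fin n := ⟨i.val - 1, by omega⟩ with hi'
    have hset : ({j | j ≤ i'} : Set (Fin n)) = {j | j < i} := by
      ext j; simp only [Set.mem_setOf_eq, Fin.lt_def, Fin.le_def]; show j.val ≤ i.val - 1 ↔ j.val < i.val; omega
    have hS := (hx i').2.2.1
    rw [SpanCond, hset] at hS
    have hmemL : x i ∈ {y : Fin n → ℤ | y ∈ N ∧ toR y ∈ span ℝ (toR '' (x '' {j | j < i}))} := by
      refine ⟨(hx i).1, ?_⟩
      rw [image_comp_toR]; exact hmem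
    rw [hS] at hmemL
    exact (hx i).2.1 hmemL

lemma indep (hx : IsMinGenTuple N x) : LinearIndependent ℝ (fun j => toR (x j)) := by
  rw [Fintype.linearIndependent_iff]
  intro g hg
  by_contra hne
  push_neg at hne
  obtain ⟨i₀, hi₀⟩ := hne
  have hnonempty : (univ.filter fun l => g l ≠ 0).Nonempty := ⟨i₀, by simp [hi₀]⟩
  set i := (univ.filter fun l => g l ≠ 0).max' hnonempty with hidef
  have higi : g i ≠ 0 := by have := Finset.max'_mem _ hnonempty; simpa using this
  have hmax : ∀ l, g l ≠ 0 → l ≤ i := fun l hl => Finset.le_max' _ _ (by simp [hl])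
  have hsplit : g i • toR (x i) = - ∑ l ∈ univ.erase i, g l • toR (x l) := by
    rw [eq_neg_iff_add_eq_zero, add_comm, Finset.sum_erase_add _ _ (Finset.mem_univ i)]
    exact hg
  have hmem : toR (x i) ∈ Submodule.span ℝ ((fun j => toR (x j)) '' {j | j < i}) := by
    have h1 : toR (x i) = ∑ l ∈ univ.erase i, (-(g i)⁻¹ * g l) • toR (x l) := by
      have := congrArg (fun v => (g i)⁻¹ • v) hsplit
      rw [inv_smul_smul₀ higi] at this
      rw [this, smul_neg, Finset.smul_sum]
      rw [← Finset.sum_neg_distrib]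
      refine Finset.sum_congr rfl fun l _ => ?_
      rw [smul_smul, neg_mul, neg_smul]
    rw [h1]
    refine Submodule.sum_mem _ fun l hl => ?_
    by_cases hgl : g l = 0
    · simp [hgl]
    · refine Submodule.smul_mem _ _ (Submodule.subset_span ?_)
      have hli : l < i := lt_of_le_of_ne (hmax l hgl) (Finset.ne_of_mem_erase hl)
      exact ⟨l, hli, rfl⟩
  exact (span_trick hx hmem).elim

lemma coords_unique (hx : IsMinGenTuple N x) {c d : Fin n → ℤ}
    (h : ∑ l, c l • x l = ∑ l, d l • x l) : c = d := by
  have h2 : ∑ l, ((c l - d l : ℤ) : ℝ) • toR (x l) = 0 := by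
    have := congrArg toR h
    rw [toR_sum_zsmul, toR_sum_zsmul] at this
    push_cast
    simp only [sub_smul]
    rw [Finset.sum_sub_distrib, this, sub_self]
  have := (Fintype.linearIndependent_iff.mp (indep hx)) _ h2
  funext l
  have hl := this l
  have h3 : c l - d l = 0 := by exact_mod_cast hl
  omega

lemma span_eq_top (hn : 1 ≤ n) (hx : IsMinGenTuple N x) :
    span ℝ (Set.range fun j => toR (x j)) = ⊤ := by
  have : Nonempty (Fin n) := ⟨⟨0, by omega⟩⟩
  exact (indep hx).span_eq_top_of_card_eq_finrank (by simp [finrank_euclideanSpace_fin])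

lemma N_coords (hn : 1 ≤ n) (hx : IsMinGenTuple N x) {w : Fin n → ℤ} (hw : w ∈ N) :
    ∃ c : Fin n → ℤ, w = ∑ l, c l • x l := by
  set istar : Fin n := ⟨n - 1, by omega⟩ with histar
  have hset : ({j | j ≤ istar} : Set (Fin n)) = Set.univ := by
    ext j; simp only [Set.mem_setOf_eq, Set.mem_univ, iff_true, Fin.le_def]
    show j.val ≤ n - 1
    have := j.isLt; omega
  have hS := (hx istar).2.2.1
  rw [SpanCond, hset] at hS
  have hmemL : w ∈ {y : Fin n → ℤ | y ∈ N ∧ toR y ∈ span ℝ (toR '' (x '' Set.univ))} := by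
    refine ⟨hw, ?_⟩
    rw [image_comp_toR, Set.image_univ, span_eq_top hn hx]
    trivial
  rw [hS] at hmemL
  obtain ⟨c, _, rfl⟩ := exists_coords_of_mem_closure hmemL
  exact ⟨c, rfl⟩

lemma span_rep {E : Type*} [AddCommGroup E] [Module ℝ E] (f : Fin n → E) {T : Set (Fin n)} {v : E}
    (hv : v ∈ span ℝ (f '' T)) :
    ∃ α : Fin n → ℝ, (∀ l, l ∉ T → α l = 0) ∧ v = ∑ l, α l • f l := by
  classical
  rw [Set.image_eq_range] at hv
  rw [mem_span_range_iff_exists_fun] at hv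
  obtain ⟨cc, hcc⟩ := hv
  refine ⟨fun l => if h : l ∈ T then cc ⟨l, h⟩ else 0, fun l hl => by simp [hl], ?_⟩
  calc v = ∑ i : ↑T, cc i • f ↑i := hcc.symm
    _ = ∑ l ∈ univ.filter (· ∈ T), (if h : l ∈ T then cc ⟨l, h⟩ else 0) • f l := by
        rw [Finset.sum_subtype (p := fun l => l ∈ T) (univ.filter (· ∈ T)) (by simp)
          (fun l => (if h : l ∈ T then cc ⟨l, h⟩ else 0) • f l)]
        exact Finset.sum_congr rfl fun l _ => by rw [dif_pos l.2]
    _ = ∑ l : Fin n, (if h : l ∈ T then cc ⟨l, h⟩ else 0) • f l := by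
        refine Finset.sum_subset (Finset.subset_univ _) (fun k _ hk => ?_)
        simp only [Finset.mem_filter, Finset.mem_univ, true_and] at hk
        simp [hk]

end Part2

section Part3
open Submodule Finset Stmt3Aux

variable {n : ℕ} {N : AddSubgroup (Fin n → ℤ)} {x : Fin n → Fin n → ℤ}

lemma candidate_norm (hn : 1 ≤ n) (hx : IsMinGenTuple N x) {s i : Fin n} (hsi : s ≤ i)
    {c : Fin n → ℤ} (hci : c i ≠ 0)
    (hgcd : (univ.filter fun l => s ≤ l).gcd c = 1) :
    ‖toR (x s)‖ ≤ ‖toR (∑ l, c l • x l)‖ := by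
  classical
  set y := ∑ l, c l • x l with hy
  have hyN : y ∈ N := AddSubgroup.sum_mem _ fun l _ => AddSubgroup.zsmul_mem _ (hx l).1 _
  have hynotin : y ∉ AddSubgroup.closure (x '' {j | j < s}) := by
    intro h
    obtain ⟨d, hd, heq⟩ := exists_coords_of_mem_closure h
    have hcd : c = d := coords_unique hx (hy.symm.trans heq)
    have : c i = 0 := by
      rw [hcd]; exact hd i (by simp only [Set.mem_setOf_eq]; exact not_lt.mpr hsi)
    exact hci this
  have hspan : SpanCond N (insert y (x '' {j | j < s})) := by
    rw [SpanCond]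
    apply Set.Subset.antisymm
    · rintro w ⟨hwN, hwspan⟩
      obtain ⟨a, rfl⟩ := N_coords hn hx hwN
      rw [Set.image_insert_eq, image_comp_toR] at hwspan
      rw [mem_span_insert] at hwspan
      obtain ⟨β, z, hz, hwz⟩ := hwspan
      obtain ⟨α, hαsupp, rfl⟩ := span_rep _ hz
      have h2 : toR y = ∑ l, (c l : ℝ) • toR (x l) := toR_sum_zsmul _
      have hb : ∑ l, (β * (c l : ℝ)) • toR (x l) = β • toR y := by
        rw [h2, Finset.smul_sum]
        exact Finset.sum_congr rfl fun l _ => (smul_smul β ((c l : ℝ)) _).symm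
      have h0 : ∑ l, ((a l : ℝ) - (β * c l + α l)) • toR (x l) = 0 := by
        have e1 : ∑ l, ((a l : ℝ)) • toR (x l)
            = β • toR y + ∑ l, α l • toR (x l) := by
          rw [← toR_sum_zsmul]; exact hwz
        calc ∑ l, ((a l : ℝ) - (β * c l + α l)) • toR (x l)
            = ∑ l, ((a l : ℝ)) • toR (x l) -
              (∑ l, (β * (c l : ℝ)) • toR (x l) + ∑ l, α l • toR (x l)) := by
              simp only [sub_smul, add_smul]
              rw [Finset.sum_sub_distrib, Finset.sum_add_distrib]
          _ = 0 := by rw [hb, e1]; abel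
      have hcoef : ∀ l, (a l : ℝ) - (β * c l + α l) = 0 :=
        Fintype.linearIndependent_iff.mp (indep hx) _ h0
      have htail : ∀ l, s ≤ l → (a l : ℝ) = β * c l := by
        intro l hl
        have h3 := hcoef l
        rw [hαsupp l (by simp only [Set.mem_setOf_eq]; exact not_lt.mpr hl)] at h3
        linarith
      have hi2 : (a i : ℝ) = β * c i := htail i hsi
      have hmul : ∀ l, s ≤ l → a i * c l = a l * c i := by
        intro l hl
        have : ((a i * c l : ℤ) : ℝ) = ((a l * c i : ℤ) : ℝ) := by
          push_cast; rw [hi2, htail l hl]; ring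
        exact_mod_cast this
      have hiF : i ∈ univ.filter (fun l => s ≤ l) := by simp [hsi]
      have hg1 : (univ.filter fun l => s ≤ l).gcd (fun l => a i * c l) = normalize (a i) := by
        rw [Finset.gcd_mul_left, hgcd, mul_one]
      have hg2' : (univ.filter fun l => s ≤ l).gcd (fun l => a i * c l)
          = (univ.filter fun l => s ≤ l).gcd (fun l => c i * a l) :=
        Finset.gcd_congr rfl (fun l hl => by rw [hmul l (by simpa using hl)]; ring)
      have hg2 : (univ.filter fun l => s ≤ l).gcd (fun l => a i * c l)
          = normalize (c i) * (univ.filter fun l => s ≤ l).gcd a := by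
        rw [hg2', Finset.gcd_mul_left]
      have habs : |a i| = |c i| * (univ.filter fun l => s ≤ l).gcd a := by
        rw [Int.abs_eq_normalize, Int.abs_eq_normalize, ← hg1, hg2]
      have hdvd : c i ∣ a i := by
        have h1 : |c i| ∣ |a i| := ⟨_, habs⟩
        exact (abs_dvd _ _).mp ((dvd_abs _ _).mp h1)
      obtain ⟨q, hq⟩ := hdvd
      have hc0 : (c i : ℝ) ≠ 0 := Int.cast_ne_zero.mpr hci
      have hβq : β = (q : ℝ) := by
        have h4 : β * (c i : ℝ) = (q : ℝ) * (c i : ℝ) := by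
          rw [← hi2, hq]; push_cast; ring
        exact mul_right_cancel₀ hc0 h4
      have htailZ : ∀ l, s ≤ l → a l = q * c l := by
        intro l hl
        have h5 := htail l hl
        rw [hβq] at h5
        exact_mod_cast h5 ▸ (by push_cast; ring : ((q : ℝ) * (c l : ℝ)) = ((q * c l : ℤ) : ℝ))
      have hwrepr : (∑ l, a l • x l) = q • y + ∑ l, (a l - q * c l) • x l := by
        rw [hy, Finset.smul_sum, ← Finset.sum_add_distrib]
        refine Finset.sum_congr rfl fun l _ => ?_
        rw [smul_smul, ← add_smul]
        congr 1; ring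
      rw [hwrepr]
      refine AddSubgroup.add_mem _
        (AddSubgroup.zsmul_mem _ (AddSubgroup.subset_closure (Set.mem_insert _ _)) _) ?_
      have hmem2 := mem_closure_of_support (x := x) {j | j < s} (fun l => a l - q * c l)
        (fun l hl => by
          have hsl : s ≤ l := not_lt.mp (by simpa using hl)
          show a l - q * c l = 0
          rw [htailZ l hsl]; ring)
      exact AddSubgroup.closure_mono (Set.subset_insert _ _) hmem2
    · have hle : AddSubgroup.closure (insert y (x '' {j | j < s})) ≤
          N ⊓ ((Submodule.span ℝ (toR '' (insert y (x '' {j | j < s})))).toAddSubgroup.comap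
            (toRHom n)) := by
        rw [AddSubgroup.closure_le]
        rintro w' (rfl | ⟨l, _, rfl⟩)
        · exact ⟨hyN, Submodule.subset_span (Set.mem_image_of_mem _ (Set.mem_insert _ _))⟩
        · exact ⟨(hx l).1, Submodule.subset_span (Set.mem_image_of_mem _
            (Set.mem_insert_of_mem _ (Set.mem_image_of_mem _ ‹_›)))⟩
      intro w hw
      have := hle hw
      exact ⟨this.1, this.2⟩
  exact (hx s).2.2.2 y hyN hynotin hspan

lemma E_mono (hn : 1 ≤ n) (hx : IsMinGenTuple N x) {s i : Fin n} (hsi : s ≤ i) :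
    ‖toR (x s)‖ ≤ ‖toR (x i)‖ := by
  classical
  set cd : Fin n → ℤ := Pi.single i (1 : ℤ) with hcd
  have hcdi : cd i = 1 := by simp [hcd]
  have hgcd : (univ.filter fun l => s ≤ l).gcd cd = 1 := by
    have hd : (univ.filter fun l => s ≤ l).gcd cd ∣ 1 := by
      have := Finset.gcd_dvd (f := cd)
        (show i ∈ univ.filter (fun l => s ≤ l) by simp [hsi])
      rwa [hcdi] at this
    have hnn : 0 ≤ (univ.filter fun l => s ≤ l).gcd cd := by
      rw [← Finset.normalize_gcd, ← Int.abs_eq_normalize]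
      exact abs_nonneg _
    exact Int.eq_one_of_dvd_one hnn hd
  have h := candidate_norm hn hx hsi (c := cd) (by rw [hcdi]; exact one_ne_zero) hgcd
  have hsum : ∑ l, cd l • x l = x i := by
    have h6 := Fintype.sum_eq_single (f := fun l => cd l • x l) i
      (fun m hm => by simp [hcd, Pi.single_eq_of_ne hm])
    rw [h6]
    simp [hcd]
  rwa [hsum] at h

end Part3

section Part4
open Submodule Finset

variable {n : ℕ}

noncomputable def pspan (f : Fin n → EuclideanSpace ℝ (Fin n)) (t : Fin n) :
    Submodule ℝ (EuclideanSpace ℝ (Fin n)) :=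
  span ℝ (f '' {l | l < t})

noncomputable def gsv (f : Fin n → EuclideanSpace ℝ (Fin n)) (t : Fin n) :
    EuclideanSpace ℝ (Fin n) :=
  f t - ↑(orthogonalProjection (pspan f t) (f t))

lemma gsv_mem_orth (f : Fin n → EuclideanSpace ℝ (Fin n)) (t : Fin n) :
    gsv f t ∈ (pspan f t)ᗮ :=
  Submodule.sub_starProjection_mem_orthogonal _

lemma norm_sq_split {v w : EuclideanSpace ℝ (Fin n)} (h : (inner ℝ v w : ℝ) = 0) :
    ‖v + w‖ ^ 2 = ‖v‖ ^ 2 + ‖w‖ ^ 2 := by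
  rw [norm_add_sq_real, h]; ring

lemma gsv_norm_le (f : Fin n → EuclideanSpace ℝ (Fin n)) (t : Fin n) :
    ‖gsv f t‖ ≤ ‖f t‖ := by
  have hsplit : f t = gsv f t + ↑(orthogonalProjection (pspan f t) (f t)) := by
    rw [gsv]; abel
  have hinner : (inner ℝ (gsv f t) (↑(orthogonalProjection (pspan f t) (f t)) :
      EuclideanSpace ℝ (Fin n)) : ℝ) = 0 := by
    rw [real_inner_comm]
    exact inner_right_of_mem_orthogonal (Submodule.coe_mem _) (gsv_mem_orth f t)
  have h2 : ‖f t‖ ^ 2 = ‖gsv f t‖ ^ 2 + ‖(↑(orthogonalProjection (pspan f t) (f t)) :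
      EuclideanSpace ℝ (Fin n))‖ ^ 2 := by
    conv_lhs => rw [hsplit]
    exact norm_sq_split hinner
  nlinarith [norm_nonneg (gsv f t), norm_nonneg (f t),
    norm_nonneg (↑(orthogonalProjection (pspan f t) (f t)) : EuclideanSpace ℝ (Fin n))]

lemma gsv_inner_eq_zero (f : Fin n → EuclideanSpace ℝ (Fin n)) {s t : Fin n} (hst : s ≠ t) :
    (inner ℝ (gsv f s) (gsv f t) : ℝ) = 0 := by
  rcases lt_or_gt_of_ne hst with h | h
  · refine inner_right_of_mem_orthogonal ?_ (gsv_mem_orth f t)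
    rw [gsv]
    refine Submodule.sub_mem _ (Submodule.subset_span ⟨s, h, rfl⟩) ?_
    refine Submodule.span_mono (Set.image_mono fun l hl => ?_) (Submodule.coe_mem _)
    exact lt_trans hl h
  · rw [real_inner_comm]
    refine inner_right_of_mem_orthogonal ?_ (gsv_mem_orth f s)
    rw [gsv]
    refine Submodule.sub_mem _ (Submodule.subset_span ⟨t, h, rfl⟩) ?_
    refine Submodule.span_mono (Set.image_mono fun l hl => ?_) (Submodule.coe_mem _)
    exact lt_trans hl h

lemma gsv_bot (f : Fin n → EuclideanSpace ℝ (Fin n)) {t : Fin n} (ht : t.val = 0) :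
    gsv f t = f t := by
  have hempty : ({l | l < t} : Set (Fin n)) = ∅ := by
    ext l; simp only [Set.mem_setOf_eq, Set.mem_empty_iff_false, iff_false, Fin.lt_def]
    omega
  have hbot : pspan f t ≤ ⊥ := le_of_eq (by rw [pspan, hempty]; simp)
  have hmem := hbot (Submodule.coe_mem (orthogonalProjection (pspan f t) (f t)))
  rw [Submodule.mem_bot] at hmem
  rw [gsv, hmem, sub_zero]

lemma det_sq_eq_prod_gsv (f : Fin n → EuclideanSpace ℝ (Fin n)) :
    (Matrix.of fun t l => f t l).det ^ 2 = ∏ t, ‖gsv f t‖ ^ 2 := by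
  classical
  have hrep : ∀ t : Fin n, ∃ α : Fin n → ℝ, (∀ l, l ∉ {l | l < t} → α l = 0) ∧
      (↑(orthogonalProjection (pspan f t) (f t)) : EuclideanSpace ℝ (Fin n))
        = ∑ l, α l • f l :=
    fun t => span_rep f (Submodule.coe_mem (orthogonalProjection (pspan f t) (f t)))
  choose γ hγsupp hγ using hrep
  set A : Matrix (Fin n) (Fin n) ℝ := Matrix.of fun t l => f t l with hA
  set L : Matrix (Fin n) (Fin n) ℝ := 1 - Matrix.of γ with hL
  have hLtri : L.BlockTriangular OrderDual.toDual := by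
    intro s t hst
    have h1 : s < t := hst
    have h2 : s ≠ t := ne_of_lt h1
    rw [hL]
    simp only [Matrix.sub_apply, Matrix.one_apply_ne h2, Matrix.of_apply]
    rw [hγsupp s t (by simp only [Set.mem_setOf_eq]; exact not_lt.mpr (le_of_lt h1))]
    ring
  have hLdet : L.det = 1 := by
    rw [Matrix.det_of_lowerTriangular L hLtri]
    refine Finset.prod_eq_one fun t _ => ?_
    rw [hL]
    simp only [Matrix.sub_apply, Matrix.one_apply_eq, Matrix.of_apply]
    rw [hγsupp t t (by simp)]
    ring
  set U : Matrix (Fin n) (Fin n) ℝ := Matrix.of fun t l => gsv f t l with hU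
  have hLA : L * A = U := by
    ext t j
    rw [Matrix.mul_apply]
    have hterm : ∀ l, (L t l) * (A l j) = (if t = l then f l j else 0) - γ t l * f l j := by
      intro l
      rw [hL, hA]
      simp only [Matrix.sub_apply, Matrix.one_apply, Matrix.of_apply]
      split_ifs <;> ring
    rw [Finset.sum_congr rfl fun l _ => hterm l, Finset.sum_sub_distrib]
    rw [Finset.sum_ite_eq (Finset.univ : Finset (Fin n)) t (fun l => f l j)]
    simp only [Finset.mem_univ, if_true]
    have hsum : ∑ l, γ t l * f l j = (↑(orthogonalProjection (pspan f t) (f t)) :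
        EuclideanSpace ℝ (Fin n)) j := by
      rw [hγ t, WithLp.ofLp_sum, Finset.sum_apply]
      rfl
    rw [hsum, hU]
    try rfl
  have hdetU : U.det = A.det := by rw [← hLA, Matrix.det_mul, hLdet, one_mul]
  have hUUt : U * U.transpose = Matrix.diagonal fun t => ‖gsv f t‖ ^ 2 := by
    ext s t
    rw [Matrix.mul_apply]
    have hentry : ∑ j, U s j * U.transpose j t = (inner ℝ (gsv f s) (gsv f t) : ℝ) := by
      rw [PiLp.inner_apply]
      refine Finset.sum_congr rfl fun j _ => ?_
      simp only [Matrix.transpose_apply, hU, Matrix.of_apply, RCLike.inner_apply, conj_trivial]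
      try ring
    rw [hentry]
    by_cases hst : s = t
    · subst hst
      rw [Matrix.diagonal_apply_eq, real_inner_self_eq_norm_sq]
    · rw [Matrix.diagonal_apply_ne _ hst, gsv_inner_eq_zero f hst]
  have := congrArg Matrix.det hUUt
  rw [Matrix.det_mul, Matrix.det_transpose, Matrix.det_diagonal, hdetU] at this
  rw [← this]; ring

end Part4

section Part5
open Finset

variable {n : ℕ}

def subEquiv (i : Fin n) : {l : Fin n // l < i} ≃ Fin i.val where
  toFun l := ⟨l.1.val, by have := l.2; rwa [Fin.lt_def] at this⟩
  invFun k := ⟨⟨k.val, lt_trans k.isLt i.isLt⟩, by rw [Fin.lt_def]; exact k.isLt⟩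
  left_inv l := by ext; rfl
  right_inv k := by ext; rfl

lemma card_sub_lt (i : Fin n) : Fintype.card {l : Fin n // l < i} = i.val := by
  rw [Fintype.card_congr (subEquiv i), Fintype.card_fin]

lemma pigeonhole (γ : Fin n → ℝ) (i : Fin n) (m : ℕ) (hm : 1 ≤ m) :
    ∃ k : ℕ, ∃ b : Fin n → ℤ, 1 ≤ k ∧ k ≤ m ^ i.val ∧ (∀ l, ¬ l < i → b l = 0) ∧
      ∀ l, l < i → |(k : ℝ) * γ l - b l| ≤ 1 / m := by
  classical
  have hm0 : (0 : ℝ) < m := by exact_mod_cast hm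
  set K := m ^ i.val with hK
  have hFb : ∀ (r : ℝ), 0 ≤ ⌊(m : ℝ) * Int.fract r⌋ ∧ ⌊(m : ℝ) * Int.fract r⌋ < m := by
    intro r
    constructor
    · exact Int.floor_nonneg.mpr (mul_nonneg (le_of_lt hm0) (Int.fract_nonneg r))
    · rw [Int.floor_lt]
      push_cast
      calc (m : ℝ) * Int.fract r < m * 1 := by
            have := Int.fract_lt_one r
            exact mul_lt_mul_of_pos_left this hm0
        _ = m := mul_one _
  set F : Fin (K + 1) → ({l : Fin n // l < i} → Fin m) :=
    fun k l => ⟨(⌊(m : ℝ) * Int.fract ((k : ℕ) * γ l.1)⌋).toNat, by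
      have h := hFb ((k : ℕ) * γ l.1)
      omega⟩ with hF
  have hcard : Fintype.card ({l : Fin n // l < i} → Fin m) < Fintype.card (Fin (K + 1)) := by
    rw [Fintype.card_fun, Fintype.card_fin, Fintype.card_fin, card_sub_lt]
    omega
  obtain ⟨p, q, hne, heq⟩ := Fintype.exists_ne_map_eq_of_card_lt F hcard
  have key : ∀ (p q : Fin (K + 1)), p < q → F p = F q →
      ∃ k : ℕ, ∃ b : Fin n → ℤ, 1 ≤ k ∧ k ≤ m ^ i.val ∧ (∀ l, ¬ l < i → b l = 0) ∧
        ∀ l, l < i → |(k : ℝ) * γ l - b l| ≤ 1 / m := by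
    intro p q hpq heq
    refine ⟨q.val - p.val, fun l => if l < i then ⌊(q.val : ℝ) * γ l⌋ - ⌊(p.val : ℝ) * γ l⌋ else 0,
      ?_, ?_, fun l hl => by simp [hl], ?_⟩
    · have : p.val < q.val := hpq
      omega
    · have := q.isLt
      omega
    · intro l hl
      have hFl' : ⌊(m : ℝ) * Int.fract ((p.val : ℝ) * γ l)⌋
          = ⌊(m : ℝ) * Int.fract ((q.val : ℝ) * γ l)⌋ := by
        have hFl := congrFun heq ⟨l, hl⟩
        simp only [hF, Fin.mk.injEq] at hFl
        have h1 := hFb ((p.val : ℝ) * γ l)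
        have h2 := hFb ((q.val : ℝ) * γ l)
        omega
      set u := Int.fract ((p.val : ℝ) * γ l) with hu
      set v := Int.fract ((q.val : ℝ) * γ l) with hv
      have hb1 : ((⌊(m : ℝ) * v⌋ : ℤ) : ℝ) ≤ (m : ℝ) * u := by
        rw [← hFl']; exact Int.floor_le _
      have hb2 : (m : ℝ) * u < ((⌊(m : ℝ) * v⌋ : ℤ) : ℝ) + 1 := by
        rw [← hFl']; exact Int.lt_floor_add_one _
      have hb3 : ((⌊(m : ℝ) * v⌋ : ℤ) : ℝ) ≤ (m : ℝ) * v := Int.floor_le _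
      have hb4 : (m : ℝ) * v < ((⌊(m : ℝ) * v⌋ : ℤ) : ℝ) + 1 := Int.lt_floor_add_one _
      have hup : v - u ≤ 1 / m := by
        rw [le_div_iff₀ hm0]
        nlinarith
      have hdown : u - v ≤ 1 / m := by
        rw [le_div_iff₀ hm0]
        nlinarith
      have hcast : ((q.val - p.val : ℕ) : ℝ) = (q.val : ℝ) - (p.val : ℝ) := by
        have hle : p.val ≤ q.val := le_of_lt hpq
        push_cast [hle]
        ring
      have heqval : ((q.val - p.val : ℕ) : ℝ) * γ l -
          ((if l < i then ⌊(q.val : ℝ) * γ l⌋ - ⌊(p.val : ℝ) * γ l⌋ else 0 : ℤ) : ℝ) = v - u := by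
        rw [if_pos hl, hcast, hv, hu, Int.fract, Int.fract]
        push_cast
        ring
      rw [heqval]
      exact abs_le.mpr ⟨by linarith, hup⟩
  rcases hne.lt_or_gt with h | h
  · exact key p q h heq
  · exact key q p h heq.symm

end Part5

section Part6
open Submodule Finset Stmt3Aux

variable {n : ℕ} {N : AddSubgroup (Fin n → ℤ)} {x : Fin n → Fin n → ℤ}

lemma descent (hn : 1 ≤ n) (hx : IsMinGenTuple N x) (i : Fin n) :
    ∀ d : ℕ, ∀ s : Fin n, s ≤ i → i.val - s.val = d → ∀ c : Fin n → ℤ, c i ≠ 0 →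
      (univ.filter fun l => s ≤ l).gcd c = 1 →
      ‖toR (x i)‖ ≤ ((i.val + 1 : ℕ) : ℝ) ^ d * ‖toR (∑ l, c l • x l)‖ := by
  classical
  intro d
  induction d with
  | zero =>
    intro s hsi hd c hci hgcd
    have hs : s = i := by
      apply Fin.ext
      have := (Fin.le_def).mp hsi
      omega
    subst hs
    rw [pow_zero, one_mul]
    exact candidate_norm hn hx (le_refl s) hci hgcd
  | succ d ih =>
    intro s hsi hd c hci hgcd
    have hsvi : s.val < i.val := by omega
    set s' : Fin n := ⟨s.val + 1, by have := i.isLt; omega⟩ with hs'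
    have hs'le : s' ≤ i := by rw [Fin.le_def]; simp only [hs']; omega
    have hstep : i.val - s'.val = d := by simp only [hs']; omega
    have hiF' : i ∈ univ.filter (fun l => s' ≤ l) := by
      simp only [Finset.mem_filter, Finset.mem_univ, true_and]
      exact hs'le
    set δ := (univ.filter fun l => s' ≤ l).gcd c with hδ
    have ht1 : (1 : ℝ) ≤ ((i.val + 1 : ℕ) : ℝ) := by
      have : (1 : ℕ) ≤ i.val + 1 := by omega
      exact_mod_cast this
    by_cases hδ1 : δ = 1
    · have h1 := ih s' hs'le hstep c hci hδ1
      refine le_trans h1 ?_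
      have h2 : ((i.val + 1 : ℕ) : ℝ) ^ d ≤ ((i.val + 1 : ℕ) : ℝ) ^ (d + 1) :=
        pow_le_pow_right₀ ht1 (by omega)
      exact mul_le_mul_of_nonneg_right h2 (norm_nonneg _)
    · -- division step
      have hδ0 : δ ≠ 0 := by
        intro h0
        rw [hδ, Finset.gcd_eq_zero_iff] at h0
        exact hci (h0 i hiF')
      have hδnn : 0 ≤ δ := by
        rw [hδ, ← Finset.normalize_gcd, ← Int.abs_eq_normalize]
        exact abs_nonneg _
      have hδ2 : 2 ≤ δ := by omega
      have hδR : (2 : ℝ) ≤ (δ : ℝ) := by exact_mod_cast hδ2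
      have hδR0 : (δ : ℝ) ≠ 0 := by positivity
      set c' : Fin n → ℤ := fun l => if s' ≤ l then c l / δ else round ((c l : ℝ) / δ) with hc'
      have hgcd' : (univ.filter fun l => s' ≤ l).gcd c' = 1 := by
        have hcongr : (univ.filter fun l => s' ≤ l).gcd c'
            = (univ.filter fun l => s' ≤ l).gcd (fun l => c l / δ) := by
          refine Finset.gcd_congr rfl fun l hl => ?_
          have : s' ≤ l := by simpa using hl
          simp only [hc', if_pos this]
        rw [hcongr, hδ]
        exact Finset.gcd_div_eq_one hiF' hci
      have hci' : c' i ≠ 0 := by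
        have hdvdi : δ ∣ c i := hδ ▸ Finset.gcd_dvd hiF'
        obtain ⟨w, hw⟩ := hdvdi
        have : c' i = w := by
          simp only [hc', if_pos hs'le, hw]
          exact Int.mul_ediv_cancel_left _ hδ0
        rw [this]
        intro hw0
        rw [hw0, mul_zero] at hw
        exact hci hw
      -- norm bound for the new vector
      have hEs : ‖toR (x s)‖ ≤ ‖toR (∑ l, c l • x l)‖ :=
        candidate_norm hn hx hsi hci hgcd
      have hdecomp : toR (∑ l, c' l • x l)
          = ((δ : ℝ))⁻¹ • toR (∑ l, c l • x l)
            + ∑ l, ((c' l : ℝ) - (c l : ℝ) / δ) • toR (x l) := by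
        rw [toR_sum_zsmul, toR_sum_zsmul, Finset.smul_sum, ← Finset.sum_add_distrib]
        refine Finset.sum_congr rfl fun l _ => ?_
        rw [smul_smul, ← add_smul]
        congr 1
        field_simp
        ring
      have hterm : ∀ l : Fin n, ‖((c' l : ℝ) - (c l : ℝ) / δ) • toR (x l)‖
          ≤ if s' ≤ l then 0 else (1 / 2) * ‖toR (x s)‖ := by
        intro l
        by_cases hl : s' ≤ l
        · rw [if_pos hl]
          have hdvdl : δ ∣ c l := hδ ▸ Finset.gcd_dvd (by simpa using hl)
          obtain ⟨w, hw⟩ := hdvdl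
          have h3 : c' l = w := by
            simp only [hc', if_pos hl, hw]
            exact Int.mul_ediv_cancel_left _ hδ0
          have h4 : ((c' l : ℝ) - (c l : ℝ) / δ) = 0 := by
            rw [h3, hw]
            push_cast
            field_simp
            ring
          rw [h4, zero_smul, norm_zero]
        · rw [if_neg hl]
          have hls : l ≤ s := by
            rw [Fin.le_def]
            have : ¬ (s.val + 1 ≤ l.val) := fun h => hl (by rw [Fin.le_def]; exact h)
            omega
          have h5 : c' l = round ((c l : ℝ) / δ) := by simp only [hc', if_neg hl]
          have h6 : |((c' l : ℝ) - (c l : ℝ) / δ)| ≤ 1 / 2 := by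
            rw [h5, abs_sub_comm]
            exact abs_sub_round _
          rw [norm_smul, Real.norm_eq_abs]
          have h7 : ‖toR (x l)‖ ≤ ‖toR (x s)‖ := E_mono hn hx hls
          have h8 : (0:ℝ) ≤ ‖toR (x l)‖ := norm_nonneg _
          nlinarith [abs_nonneg ((c' l : ℝ) - (c l : ℝ) / δ)]
      have hcard : (univ.filter fun l : Fin n => ¬ s' ≤ l).card = s.val + 1 := by
        have hcongr : (univ.filter fun l : Fin n => ¬ s' ≤ l)
            = (univ.filter fun l : Fin n => l < s') := by
          refine Finset.filter_congr fun l _ => ?_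
          simp [not_le]
        rw [hcongr]
        have h9 := card_sub_lt s'
        rw [Fintype.card_subtype] at h9
        rw [h9]
      have herr : ‖∑ l, ((c' l : ℝ) - (c l : ℝ) / δ) • toR (x l)‖
          ≤ ((s.val + 1 : ℕ) : ℝ) * ((1 / 2) * ‖toR (x s)‖) := by
        refine le_trans (norm_sum_le _ _) ?_
        refine le_trans (Finset.sum_le_sum fun l _ => hterm l) ?_
        rw [Finset.sum_ite, Finset.sum_const, Finset.sum_const, smul_zero, zero_add, hcard,
          nsmul_eq_mul]
      have hinv : (δ : ℝ)⁻¹ ≤ 1 / 2 := by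
        rw [inv_le_comm₀ (by linarith) (by norm_num)]
        linarith
      have hy'norm : ‖toR (∑ l, c' l • x l)‖
          ≤ ((i.val + 1 : ℕ) : ℝ) * ‖toR (∑ l, c l • x l)‖ := by
        rw [hdecomp]
        refine le_trans (norm_add_le _ _) ?_
        rw [norm_smul, Real.norm_eq_abs, abs_inv, abs_of_nonneg (by positivity : (0:ℝ) ≤ (δ:ℝ))]
        have hYnn : (0:ℝ) ≤ ‖toR (∑ l, c l • x l)‖ := norm_nonneg _
        have h12 : (δ : ℝ)⁻¹ * ‖toR (∑ l, c l • x l)‖ ≤ (1/2) * ‖toR (∑ l, c l • x l)‖ :=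
          mul_le_mul_of_nonneg_right hinv hYnn
        have h13 : ((s.val + 1 : ℕ) : ℝ) ≤ ((i.val : ℕ) : ℝ) := by
          have : s.val + 1 ≤ i.val := by omega
          exact_mod_cast this
        have h14 : ((s.val + 1 : ℕ) : ℝ) * ((1/2) * ‖toR (x s)‖)
            ≤ ((i.val : ℕ) : ℝ) * ((1/2) * ‖toR (∑ l, c l • x l)‖) := by
          have hs1 : (0:ℝ) ≤ ((s.val + 1 : ℕ) : ℝ) := by positivity
          have hEnn : (0:ℝ) ≤ ‖toR (x s)‖ := norm_nonneg _
          nlinarith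
        have h15 : ((i.val : ℕ) : ℝ) + 1 ≤ 2 * ((i.val + 1 : ℕ) : ℝ) := by
          push_cast; linarith [Nat.cast_nonneg (α := ℝ) i.val]
        calc (δ : ℝ)⁻¹ * ‖toR (∑ l, c l • x l)‖
              + ‖∑ l, ((c' l : ℝ) - (c l : ℝ) / δ) • toR (x l)‖
            ≤ (1/2) * ‖toR (∑ l, c l • x l)‖
              + ((i.val : ℕ) : ℝ) * ((1/2) * ‖toR (∑ l, c l • x l)‖) :=
              add_le_add h12 (le_trans herr h14)
          _ ≤ ((i.val + 1 : ℕ) : ℝ) * ‖toR (∑ l, c l • x l)‖ := by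
              push_cast
              nlinarith [norm_nonneg (toR (∑ l, c l • x l)), Nat.cast_nonneg (α := ℝ) i.val]
      have h11 := ih s' hs'le hstep c' hci' hgcd'
      refine le_trans h11 ?_
      rw [pow_succ]
      calc ((i.val + 1 : ℕ) : ℝ) ^ d * ‖toR (∑ l, c' l • x l)‖
          ≤ ((i.val + 1 : ℕ) : ℝ) ^ d * (((i.val + 1 : ℕ) : ℝ) * ‖toR (∑ l, c l • x l)‖) :=
            mul_le_mul_of_nonneg_left hy'norm (by positivity)
        _ = ((i.val + 1 : ℕ) : ℝ) ^ d * ((i.val + 1 : ℕ) : ℝ) * ‖toR (∑ l, c l • x l)‖ := by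
            ring

end Part6

section Part7
open Submodule Finset Stmt3Aux

variable {n : ℕ} {N : AddSubgroup (Fin n → ℤ)} {x : Fin n → Fin n → ℤ}

lemma level_bound (hn : 1 ≤ n) (hx : IsMinGenTuple N x) (i : Fin n) :
    ‖toR (x i)‖ ≤ (4/3) * ((i.val + 1 : ℕ) : ℝ) ^ i.val
      * ((4 * (i.val + 1) ^ (i.val + 1) : ℕ) : ℝ) ^ i.val
      * ‖gsv (fun j => toR (x j)) i‖ := by
  classical
  set e : Fin n → EuclideanSpace ℝ (Fin n) := fun j => toR (x j) with he
  set t : ℕ := i.val with htdef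
  set m : ℕ := 4 * (t + 1) ^ (t + 1) with hmdef
  have hm1 : 1 ≤ m := Nat.one_le_iff_ne_zero.mpr (Nat.mul_ne_zero (by norm_num) (pow_ne_zero _ (by omega)))
  have hmR : ((m : ℕ) : ℝ) = 4 * ((t + 1 : ℕ) : ℝ) ^ (t + 1) := by
    rw [hmdef]; push_cast; ring
  set T : ℝ := ((t + 1 : ℕ) : ℝ) with hTdef
  have hT1 : (1 : ℝ) ≤ T := by rw [hTdef]; exact_mod_cast Nat.le_add_left 1 t
  have hT0 : (0 : ℝ) < T := lt_of_lt_of_le zero_lt_one hT1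
  -- coordinates of the projection
  obtain ⟨γ, hγsupp, hγ⟩ := span_rep e
    (Submodule.coe_mem (orthogonalProjection (pspan e i) (e i)))
  obtain ⟨k, b, hk1, hkK, hbsupp, happrox⟩ := pigeonhole γ i m hm1
  set c0 : Fin n → ℤ := fun l => (if l = i then (k : ℤ) else 0) - b l with hc0
  have hc0i : c0 i = (k : ℤ) := by
    simp only [hc0]
    rw [hbsupp i (lt_irrefl i)]
    simp
  have hc0ine : c0 i ≠ 0 := by
    rw [hc0i]
    exact_mod_cast Nat.one_le_iff_ne_zero.mp hk1
  -- decomposition of toR y0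
  have hei : e i = gsv e i + ∑ l, γ l • e l := by
    rw [← hγ]
    rw [gsv]
    abel
  have hdec : toR (∑ l, c0 l • x l)
      = (k : ℝ) • gsv e i + ∑ l, ((k : ℝ) * γ l - (b l : ℝ)) • e l := by
    rw [toR_sum_zsmul]
    have hstep1 : ∀ l, ((c0 l : ℤ) : ℝ) • e l
        = (if l = i then (k : ℝ) else 0) • e l - (b l : ℝ) • e l := by
      intro l
      rw [← sub_smul]
      congr 1
      rw [hc0]
      push_cast
      split_ifs <;> ring
    rw [Finset.sum_congr rfl fun l _ => hstep1 l, Finset.sum_sub_distrib]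
    have hstep2 : ∑ l, (if l = i then (k : ℝ) else 0) • e l = (k : ℝ) • e i := by
      rw [Finset.sum_congr rfl (fun l _ => by rw [ite_smul, zero_smul])]
      rw [Finset.sum_ite_eq' Finset.univ i (fun l => (k : ℝ) • e l)]
      simp
    rw [hstep2, hei, smul_add, Finset.smul_sum, add_sub_assoc, ← Finset.sum_sub_distrib]
    congr 1
    refine Finset.sum_congr rfl fun l _ => ?_
    rw [smul_smul, ← sub_smul]
  -- norm bound
  have hcardlt : (univ.filter fun l : Fin n => l < i).card = t := by
    have h9 := card_sub_lt i
    rw [Fintype.card_subtype] at h9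
    exact h9
  have hy0 : ‖toR (∑ l, c0 l • x l)‖
      ≤ ((m ^ t : ℕ) : ℝ) * ‖gsv e i‖ + (t : ℝ) * ((1 / m) * ‖toR (x i)‖) := by
    rw [hdec]
    refine le_trans (norm_add_le _ _) (add_le_add ?_ ?_)
    · rw [norm_smul, Real.norm_eq_abs, abs_of_nonneg (by positivity : (0:ℝ) ≤ (k : ℝ))]
      have hkKR : ((k : ℕ) : ℝ) ≤ ((m ^ t : ℕ) : ℝ) := by exact_mod_cast hkK
      exact mul_le_mul_of_nonneg_right hkKR (norm_nonneg _)
    · refine le_trans (norm_sum_le _ _) ?_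
      have hterm : ∀ l : Fin n, ‖((k : ℝ) * γ l - (b l : ℝ)) • e l‖
          ≤ if l < i then (1 / m) * ‖toR (x i)‖ else 0 := by
        intro l
        by_cases hl : l < i
        · rw [if_pos hl, norm_smul, Real.norm_eq_abs]
          have h1 := happrox l hl
          have h2 : ‖e l‖ ≤ ‖toR (x i)‖ := E_mono hn hx (le_of_lt hl)
          have h3 : (0:ℝ) ≤ ‖e l‖ := norm_nonneg _
          have h4 : (0:ℝ) ≤ |(k : ℝ) * γ l - (b l : ℝ)| := abs_nonneg _
          nlinarith
        · rw [if_neg hl]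
          rw [hγsupp l hl, hbsupp l hl]
          simp
      refine le_trans (Finset.sum_le_sum fun l _ => hterm l) ?_
      rw [Finset.sum_ite, Finset.sum_const, Finset.sum_const, smul_zero, add_zero, hcardlt,
        nsmul_eq_mul]
  -- gcd normalization
  set δ := Finset.univ.gcd c0 with hδ
  have hδ0 : δ ≠ 0 := by
    intro h0
    rw [hδ, Finset.gcd_eq_zero_iff] at h0
    exact hc0ine (h0 i (Finset.mem_univ i))
  have hδnn : 0 ≤ δ := by
    rw [hδ, ← Finset.normalize_gcd, ← Int.abs_eq_normalize]
    exact abs_nonneg _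
  have hδ1R : (1 : ℝ) ≤ (δ : ℝ) := by
    have : 1 ≤ δ := by omega
    exact_mod_cast this
  set c1 : Fin n → ℤ := fun l => c0 l / δ with hc1
  have hgcd1 : Finset.univ.gcd c1 = 1 := Finset.gcd_div_eq_one (Finset.mem_univ i) hc0ine
  have hc1i : c1 i ≠ 0 := by
    have hdvdi : δ ∣ c0 i := hδ ▸ Finset.gcd_dvd (Finset.mem_univ i)
    obtain ⟨w, hw⟩ := hdvdi
    have : c1 i = w := by
      simp only [hc1, hw]
      exact Int.mul_ediv_cancel_left _ hδ0
    rw [this]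
    intro hw0
    rw [hw0, mul_zero] at hw
    exact hc0ine hw
  have hnorm1 : ‖toR (∑ l, c1 l • x l)‖ ≤ ‖toR (∑ l, c0 l • x l)‖ := by
    have hdec1 : toR (∑ l, c1 l • x l) = ((δ : ℝ))⁻¹ • toR (∑ l, c0 l • x l) := by
      rw [toR_sum_zsmul, toR_sum_zsmul, Finset.smul_sum]
      refine Finset.sum_congr rfl fun l _ => ?_
      rw [smul_smul]
      congr 1
      have hdvdl : δ ∣ c0 l := hδ ▸ Finset.gcd_dvd (Finset.mem_univ l)
      obtain ⟨w, hw⟩ := hdvdl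
      have hq : c1 l = w := by
        simp only [hc1, hw]
        exact Int.mul_ediv_cancel_left _ hδ0
      rw [hq, hw]
      push_cast
      have : (δ : ℝ) ≠ 0 := by linarith
      field_simp
    rw [hdec1, norm_smul, Real.norm_eq_abs, abs_inv, abs_of_nonneg (by linarith : (0:ℝ) ≤ (δ:ℝ))]
    have h5 : (δ : ℝ)⁻¹ ≤ 1 := by
      rw [inv_le_one_iff₀]
      right; exact hδ1R
    nlinarith [norm_nonneg (toR (∑ l, c0 l • x l))]
  -- descent
  set s0 : Fin n := ⟨0, by omega⟩ with hs0
  have hs0le : s0 ≤ i := by rw [Fin.le_def]; simp [hs0]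
  have hfilter0 : (univ.filter fun l : Fin n => s0 ≤ l) = univ := by
    refine Finset.filter_true_of_mem fun l _ => ?_
    rw [Fin.le_def]; simp [hs0]
  have hgcd0 : (univ.filter fun l : Fin n => s0 ≤ l).gcd c1 = 1 := by
    rw [hfilter0]; exact hgcd1
  have hdesc := descent hn hx i t s0 hs0le (by simp [hs0, htdef]) c1 hc1i hgcd0
  -- combine
  have hE : ‖toR (x i)‖ ≤ T ^ t * (((m ^ t : ℕ) : ℝ) * ‖gsv e i‖
      + (t : ℝ) * ((1 / m) * ‖toR (x i)‖)) := by
    refine le_trans hdesc ?_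
    exact mul_le_mul_of_nonneg_left (le_trans hnorm1 hy0) (by positivity)
  have hsmall : T ^ t * ((t : ℝ) * ((1 / m) * ‖toR (x i)‖)) ≤ (1/4) * ‖toR (x i)‖ := by
    have htT : (t : ℝ) ≤ T := by rw [hTdef]; exact_mod_cast Nat.le_succ t
    have hEnn : (0:ℝ) ≤ ‖toR (x i)‖ := norm_nonneg _
    have hTt0 : (0:ℝ) < T ^ t := by positivity
    have hT0' : T ≠ 0 := ne_of_gt hT0
    have heq : T ^ t * ((t : ℝ) * ((1 / m) * ‖toR (x i)‖))
        = ((t : ℝ) / T) * ((1/4) * ‖toR (x i)‖) := by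
      rw [hmR, pow_succ]
      field_simp
    rw [heq]
    have hdivle : (t : ℝ) / T ≤ 1 := by
      rw [div_le_one hT0]; exact htT
    exact mul_le_of_le_one_left (by positivity) hdivle
  have hfinal : ‖toR (x i)‖ ≤ T ^ t * ((m ^ t : ℕ) : ℝ) * ‖gsv e i‖ + (1/4) * ‖toR (x i)‖ := by
    calc ‖toR (x i)‖ ≤ T ^ t * (((m ^ t : ℕ) : ℝ) * ‖gsv e i‖)
          + T ^ t * ((t : ℝ) * ((1 / m) * ‖toR (x i)‖)) := by rw [← mul_add]; exact hE
      _ ≤ T ^ t * ((m ^ t : ℕ) : ℝ) * ‖gsv e i‖ + (1/4) * ‖toR (x i)‖ := by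
          rw [mul_assoc]
          exact add_le_add (le_refl _) hsmall
  have hmtR : ((m ^ t : ℕ) : ℝ) = ((m : ℕ) : ℝ) ^ t := by push_cast; ring
  rw [hmtR] at hfinal
  have h3 : (3/4 : ℝ) * ‖toR (x i)‖ ≤ T ^ t * ((m : ℕ) : ℝ) ^ t * ‖gsv e i‖ := by linarith
  calc ‖toR (x i)‖ = (4/3) * ((3/4) * ‖toR (x i)‖) := by ring
    _ ≤ (4/3) * (T ^ t * ((m : ℕ) : ℝ) ^ t * ‖gsv e i‖) := by linarith
    _ = 4/3 * T ^ t * ((m : ℕ) : ℝ) ^ t * ‖gsv e i‖ := by ring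

end Part7

section Part8

lemma Dc_zero : Dc 0 = 1 := rfl
lemma Dc_one : Dc 1 = 1 := rfl
lemma Dc_two_eq (q : ℕ) :
    Dc (q + 2) = (Dc (q + 1)) ^ 2 * (4 * ((q + 2 : ℕ) : ℝ) ^ 2 * (Dc (q + 1)) ^ 3) ^ (q + 2) := by
  rw [Dc]

lemma one_le_Dc (k : ℕ) : (1 : ℝ) ≤ Dc k := by
  induction k using Nat.strong_induction_on with
  | _ k ih =>
    match k with
    | 0 => exact le_of_eq Dc_zero.symm
    | 1 => exact le_of_eq Dc_one.symm
    | (q + 2) =>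
      have h1 : (1 : ℝ) ≤ Dc (q + 1) := ih (q + 1) (by omega)
      rw [Dc_two_eq]
      have hc : (1 : ℝ) ≤ ((q + 2 : ℕ) : ℝ) := by exact_mod_cast Nat.le_add_left 1 (q + 1)
      have h2 : (1 : ℝ) ≤ 4 * ((q + 2 : ℕ) : ℝ) ^ 2 * Dc (q + 1) ^ 3 := by
        have h2a : (1:ℝ) ≤ ((q + 2 : ℕ) : ℝ) ^ 2 := one_le_pow₀ hc
        have h2b : (1:ℝ) ≤ Dc (q + 1) ^ 3 := one_le_pow₀ h1
        nlinarith
      have h3 : (1 : ℝ) ≤ (4 * ((q + 2 : ℕ) : ℝ) ^ 2 * Dc (q + 1) ^ 3) ^ (q + 2) :=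
        one_le_pow₀ h2
      have h4 : (1:ℝ) ≤ Dc (q + 1) ^ 2 := one_le_pow₀ h1
      calc (1:ℝ) = 1 * 1 := by norm_num
        _ ≤ Dc (q + 1) ^ 2 * (4 * ((q + 2 : ℕ) : ℝ) ^ 2 * Dc (q + 1) ^ 3) ^ (q + 2) :=
          mul_le_mul h4 h3 zero_le_one (by positivity)

lemma Dc_pos (k : ℕ) : (0 : ℝ) < Dc k := lt_of_lt_of_le zero_lt_one (one_le_Dc k)

lemma Dc_ge_pow (p : ℕ) (hp : 2 ≤ p) : ((p + 1 : ℕ) : ℝ) ^ (2 * p) ≤ Dc p := by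
  obtain ⟨q, rfl⟩ : ∃ q, p = q + 2 := ⟨p - 2, by omega⟩
  rw [Dc_two_eq]
  set A := Dc (q + 1) with hA
  have hA1 : (1 : ℝ) ≤ A := one_le_Dc (q + 1)
  set c : ℝ := ((q + 2 : ℕ) : ℝ) with hc
  have hc1 : (1 : ℝ) ≤ c := by rw [hc]; exact_mod_cast Nat.le_add_left 1 (q + 1)
  have hc0 : (0 : ℝ) ≤ c := by linarith
  -- (p+1)^(2p) ≤ (2p)^(2p) = (4p^2)^p ≤ (4c^2)^p... here base is c = p
  have hstep1 : ((q + 2 + 1 : ℕ) : ℝ) ^ (2 * (q + 2)) ≤ (2 * c) ^ (2 * (q + 2)) := by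
    refine pow_le_pow_left₀ (by positivity) ?_ _
    rw [hc]; push_cast; linarith
  have hstep2 : (2 * c) ^ (2 * (q + 2)) = (4 * c ^ 2) ^ (q + 2) := by
    rw [pow_mul]
    congr 1
    ring
  have hstep3 : (4 * c ^ 2) ^ (q + 2) ≤ (4 * c ^ 2 * A ^ 3) ^ (q + 2) := by
    refine pow_le_pow_left₀ (by positivity) ?_ _
    exact le_mul_of_one_le_right (by positivity) (one_le_pow₀ hA1)
  have hstep4 : (4 * c ^ 2 * A ^ 3) ^ (q + 2) ≤ A ^ 2 * (4 * c ^ 2 * A ^ 3) ^ (q + 2) :=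
    le_mul_of_one_le_left (by positivity) (one_le_pow₀ hA1)
  calc ((q + 2 + 1 : ℕ) : ℝ) ^ (2 * (q + 2)) ≤ (2 * c) ^ (2 * (q + 2)) := hstep1
    _ = (4 * c ^ 2) ^ (q + 2) := hstep2
    _ ≤ (4 * c ^ 2 * A ^ 3) ^ (q + 2) := hstep3
    _ ≤ A ^ 2 * (4 * c ^ 2 * A ^ 3) ^ (q + 2) := hstep4

lemma crat_le (p : ℕ) (hp : 1 ≤ p) :
    (4/3 : ℝ) * ((p + 1 : ℕ) : ℝ) ^ p * ((4 * (p + 1) ^ (p + 1) : ℕ) : ℝ) ^ p * Dc p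
      ≤ Dc (p + 1) := by
  set c : ℝ := ((p + 1 : ℕ) : ℝ) with hc
  have hc1 : (1 : ℝ) ≤ c := by rw [hc]; exact_mod_cast Nat.le_add_left 1 p
  have hc0 : (0 : ℝ) < c := by linarith
  set A := Dc p with hA
  have hA1 : (1 : ℝ) ≤ A := one_le_Dc p
  have hA0 : (0 : ℝ) < A := by linarith
  have hDp1 : Dc (p + 1) = A ^ 2 * (4 * c ^ 2 * A ^ 3) ^ (p + 1) := by
    obtain ⟨q, rfl⟩ : ∃ q, p = q + 1 := ⟨p - 1, by omega⟩
    rw [Dc_two_eq]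
  have hcast : ((4 * (p + 1) ^ (p + 1) : ℕ) : ℝ) = 4 * c ^ (p + 1) := by
    rw [hc]; push_cast; ring
  rw [hcast, hDp1]
  -- LHS = (4/3) * 4^p * c^(p + (p+1)*p) * A
  have hlhs : (4/3 : ℝ) * c ^ p * (4 * c ^ (p + 1)) ^ p * A
      = (4/3) * 4 ^ p * c ^ (p + (p + 1) * p) * A := by
    rw [mul_pow, ← pow_mul, pow_add]
    ring
  -- RHS = 4^(p+1) * c^(2*(p+1)) * A^(3*(p+1)+2)
  have hrhs : A ^ 2 * (4 * c ^ 2 * A ^ 3) ^ (p + 1)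
      = 4 ^ (p + 1) * c ^ (2 * (p + 1)) * A ^ (3 * (p + 1) + 2) := by
    rw [mul_pow, mul_pow, ← pow_mul, ← pow_mul, pow_add]
    ring
  rw [hlhs, hrhs]
  have hAbig : A ^ (3 * (p + 1) + 2) = A ^ (3 * p + 4) * A := by
    have he9 : 3 * (p + 1) + 2 = (3 * p + 4) + 1 := by ring
    rw [he9, pow_succ]
  rcases Nat.lt_or_ge p 2 with hp2 | hp2
  · -- p = 1 : numeric
    have hp1 : p = 1 := by omega
    subst hp1
    norm_num at *
    have h8 : A ≤ A ^ 8 := le_self_pow₀ hA1 (by norm_num)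
    linarith
  · -- p ≥ 2 : use Dc_ge_pow
    have hge : c ^ (2 * p) ≤ A := by rw [hc, hA]; exact Dc_ge_pow p hp2
    have hApow : c ^ (2 * p * (3 * p + 4)) ≤ A ^ (3 * p + 4) := by
      calc c ^ (2 * p * (3 * p + 4)) = (c ^ (2 * p)) ^ (3 * p + 4) := by rw [← pow_mul]
        _ ≤ A ^ (3 * p + 4) := pow_le_pow_left₀ (by positivity) hge _
    have hcexp : c ^ (p + (p + 1) * p) ≤ c ^ (2 * (p + 1)) * c ^ (2 * p * (3 * p + 4)) := by
      rw [← pow_add]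
      refine pow_le_pow_right₀ hc1 ?_
      nlinarith
    have hA0' : (0:ℝ) ≤ A := le_of_lt hA0
    calc (4/3 : ℝ) * 4 ^ p * c ^ (p + (p + 1) * p) * A
        ≤ (4/3 : ℝ) * 4 ^ p * (c ^ (2 * (p + 1)) * c ^ (2 * p * (3 * p + 4))) * A :=
          mul_le_mul_of_nonneg_right
            (mul_le_mul_of_nonneg_left hcexp (by positivity)) hA0'
      _ = (4/3 : ℝ) * (4 ^ p * c ^ (2 * (p + 1))) * (c ^ (2 * p * (3 * p + 4)) * A) := by ring
      _ ≤ (4/3 : ℝ) * (4 ^ p * c ^ (2 * (p + 1))) * (A ^ (3 * p + 4) * A) :=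
          mul_le_mul_of_nonneg_left
            (mul_le_mul_of_nonneg_right hApow hA0') (by positivity)
      _ ≤ 4 * (4 ^ p * c ^ (2 * (p + 1))) * (A ^ (3 * p + 4) * A) :=
          mul_le_mul_of_nonneg_right
            (mul_le_mul_of_nonneg_right (by norm_num) (by positivity)) (by positivity)
      _ = 4 ^ (p + 1) * c ^ (2 * (p + 1)) * A ^ (3 * (p + 1) + 2) := by
          rw [hAbig]; ring

end Part8

section Part9
open Submodule Finset Stmt3Aux

variable {n : ℕ} {N : AddSubgroup (Fin n → ℤ)} {x : Fin n → Fin n → ℤ}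

lemma level_Dc (hn : 1 ≤ n) (hx : IsMinGenTuple N x) (i : Fin n) :
    ‖toR (x i)‖ * Dc i.val ≤ Dc (i.val + 1) * ‖gsv (fun j => toR (x j)) i‖ := by
  rcases Nat.eq_zero_or_pos i.val with h0 | hpos
  · rw [h0, Dc_zero, Dc_one, mul_one, one_mul, gsv_bot _ h0]
  · have hlb := level_bound hn hx i
    have hcr := crat_le i.val hpos
    calc ‖toR (x i)‖ * Dc i.val
        ≤ ((4/3) * ((i.val + 1 : ℕ) : ℝ) ^ i.val
            * ((4 * (i.val + 1) ^ (i.val + 1) : ℕ) : ℝ) ^ i.val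
            * ‖gsv (fun j => toR (x j)) i‖) * Dc i.val :=
          mul_le_mul_of_nonneg_right hlb (Dc_pos _).le
      _ = ((4/3) * ((i.val + 1 : ℕ) : ℝ) ^ i.val
            * ((4 * (i.val + 1) ^ (i.val + 1) : ℕ) : ℝ) ^ i.val * Dc i.val)
            * ‖gsv (fun j => toR (x j)) i‖ := by ring
      _ ≤ Dc (i.val + 1) * ‖gsv (fun j => toR (x j)) i‖ :=
          mul_le_mul_of_nonneg_right hcr (norm_nonneg _)

lemma prod_E_le (hn : 1 ≤ n) (hx : IsMinGenTuple N x) :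
    ∏ t : Fin n, ‖toR (x t)‖ ≤ Dc n * ∏ t : Fin n, ‖gsv (fun j => toR (x j)) t‖ := by
  have hprod := Finset.prod_le_prod
    (s := Finset.univ)
    (f := fun i : Fin n => ‖toR (x i)‖ * Dc i.val)
    (g := fun i : Fin n => Dc (i.val + 1) * ‖gsv (fun j => toR (x j)) i‖)
    (fun i _ => mul_nonneg (norm_nonneg _) (Dc_pos _).le)
    (fun i _ => level_Dc hn hx i)
  rw [Finset.prod_mul_distrib, Finset.prod_mul_distrib] at hprod
  have h1 : ∏ i : Fin n, Dc (i.val) = ∏ k ∈ Finset.range n, Dc k :=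
    Fin.prod_univ_eq_prod_range _ n
  have h2 : ∏ i : Fin n, Dc (i.val + 1) = ∏ k ∈ Finset.range n, Dc (k + 1) :=
    Fin.prod_univ_eq_prod_range (fun k => Dc (k + 1)) n
  have h3 : ∏ k ∈ Finset.range n, Dc (k + 1) = (∏ k ∈ Finset.range n, Dc k) * Dc n := by
    have h4 := Finset.prod_range_succ' Dc n
    have h5 := Finset.prod_range_succ Dc n
    rw [Dc_zero, mul_one] at h4
    rw [← h4, h5]
  have hP : (0:ℝ) < ∏ k ∈ Finset.range n, Dc k := Finset.prod_pos (fun k _ => Dc_pos k)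
  rw [h1, h2, h3] at hprod
  have hprod2 : (∏ t : Fin n, ‖toR (x t)‖) * (∏ k ∈ Finset.range n, Dc k)
      ≤ (Dc n * ∏ t : Fin n, ‖gsv (fun j => toR (x j)) t‖) * (∏ k ∈ Finset.range n, Dc k) := by
    calc (∏ t : Fin n, ‖toR (x t)‖) * (∏ k ∈ Finset.range n, Dc k)
        ≤ ((∏ k ∈ Finset.range n, Dc k) * Dc n)
          * ∏ t : Fin n, ‖gsv (fun j => toR (x j)) t‖ := hprod
      _ = (Dc n * ∏ t : Fin n, ‖gsv (fun j => toR (x j)) t‖)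
          * (∏ k ∈ Finset.range n, Dc k) := by ring
  exact le_of_mul_le_mul_right hprod2 hP


/-- For every `n ≥ 1`, every finite-index subgroup `N` of `ℤⁿ`, every minimal
generating tuple `(x₁,…,xₙ)` of `N`, and all reals `a₁,…,aₙ`, one has
`‖a₁x₁ + … + aₙxₙ‖ ≥ (1/Dₙ) · maxᵢ ‖aᵢxᵢ‖` (stated as the inequality for every `i`). -/
theorem stmt3 (n : ℕ) (hn : 1 ≤ n) (N : AddSubgroup (Fin n → ℤ)) (hN : N.FiniteIndex)
    (x : Fin n → (Fin n → ℤ)) (hx : IsMinGenTuple N x) (a : Fin n → ℝ) :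
    ∀ i : Fin n, (1 / Dc n) * ‖a i • toR (x i)‖ ≤ ‖∑ j, a j • toR (x j)‖ := by
  classical
  intro i
  set e : Fin n → EuclideanSpace ℝ (Fin n) := fun j => toR (x j) with he
  set lst : Fin n := ⟨n - 1, by omega⟩ with hlst
  set σ : Equiv.Perm (Fin n) := Equiv.swap i lst with hσ
  set f : Fin n → EuclideanSpace ℝ (Fin n) := e ∘ σ with hf
  set A : Matrix (Fin n) (Fin n) ℝ := Matrix.of fun t l => e t l with hA
  -- determinant squared invariance
  have hdetperm : (Matrix.of fun t l => f t l).det = ((Equiv.Perm.sign σ : ℤ) : ℝ) * A.det := by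
    have hAf : (Matrix.of fun t l => f t l) = A.submatrix (⇑σ) id := rfl
    rw [hAf]
    exact Matrix.det_permute σ A
  have hsq : (Matrix.of fun t l => f t l).det ^ 2 = A.det ^ 2 := by
    rw [hdetperm, mul_pow]
    rcases Int.units_eq_one_or (Equiv.Perm.sign σ) with h | h <;> rw [h] <;> norm_num
  have hprodeq : ∏ t, ‖gsv e t‖ = ∏ t, ‖gsv f t‖ := by
    have h1 : (∏ t, ‖gsv e t‖) ^ 2 = (∏ t, ‖gsv f t‖) ^ 2 := by
      rw [← Finset.prod_pow, ← Finset.prod_pow, ← det_sq_eq_prod_gsv, ← det_sq_eq_prod_gsv]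
      exact hsq.symm
    have ha : (0:ℝ) ≤ ∏ t, ‖gsv e t‖ := Finset.prod_nonneg fun t _ => norm_nonneg _
    have hb : (0:ℝ) ≤ ∏ t, ‖gsv f t‖ := Finset.prod_nonneg fun t _ => norm_nonneg _
    rw [← Real.sqrt_sq ha, h1, Real.sqrt_sq hb]
  -- the swap basics
  have hσlst : σ lst = i := Equiv.swap_apply_right i lst
  have hσself : ∀ j, σ (σ j) = j := fun j => Equiv.swap_apply_self i lst j
  have hflst : f lst = e i := by rw [hf]; simp only [Function.comp_apply, hσlst]
  -- W and the set identity
  set W : Submodule ℝ (EuclideanSpace ℝ (Fin n)) := span ℝ (e '' {j | j ≠ i}) with hW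
  have hWeq : pspan f lst = W := by
    rw [pspan, hW]
    congr 1
    have hset1 : ({l : Fin n | l < lst} : Set (Fin n)) = {l | l ≠ lst} := by
      ext l
      simp only [Set.mem_setOf_eq, Fin.lt_def, ne_eq, Fin.ext_iff]
      have := l.isLt
      constructor
      · intro h; omega
      · intro h
        simp only [hlst] at h ⊢
        omega
    rw [hset1]
    ext v
    constructor
    · rintro ⟨l, hl, rfl⟩
      refine ⟨σ l, ?_, rfl⟩
      intro hcon
      apply hl
      have : σ l = σ lst := by rw [hσlst]; exact hcon
      exact σ.injective this
    · rintro ⟨j, hj, rfl⟩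
      refine ⟨σ j, ?_, by rw [hf]; simp only [Function.comp_apply, hσself]⟩
      intro hcon
      apply hj
      have : σ (σ j) = σ lst := by rw [hcon]
      rw [hσself, hσlst] at this
      exact this
  set dd : ℝ := ‖gsv f lst‖ with hdd
  set u : EuclideanSpace ℝ (Fin n) := gsv f lst with hu
  have huW : u ∈ Wᗮ := by
    have h := gsv_mem_orth f lst
    have h2 : (pspan f lst)ᗮ = Wᗮ := by rw [hWeq]
    exact h2 ▸ h
  have heiu : e i - u ∈ W := by
    have hmem := Submodule.coe_mem (orthogonalProjection (pspan f lst) (f lst))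
    have h3 : e i - u = ↑(orthogonalProjection (pspan f lst) (f lst)) := by
      rw [hu, gsv, hflst]
      abel
    rw [h3]
    exact hWeq ▸ hmem
  -- lower bound on the sum
  have hsum : ∑ j, a j • e j = a i • u + (a i • (e i - u) + ∑ j ∈ univ.erase i, a j • e j) := by
    rw [← Finset.sum_erase_add univ _ (Finset.mem_univ i)]
    rw [smul_sub]
    abel
  have hwmem : a i • (e i - u) + ∑ j ∈ univ.erase i, a j • e j ∈ W := by
    refine Submodule.add_mem _ (Submodule.smul_mem _ _ heiu) (Submodule.sum_mem _ fun j hj => ?_)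
    refine Submodule.smul_mem _ _ (Submodule.subset_span ?_)
    exact ⟨j, Finset.ne_of_mem_erase hj, rfl⟩
  have hlower : |a i| * dd ≤ ‖∑ j, a j • e j‖ := by
    have hinner : (inner ℝ (a i • u) (a i • (e i - u) + ∑ j ∈ univ.erase i, a j • e j) : ℝ) = 0 := by
      rw [real_inner_comm]
      exact inner_right_of_mem_orthogonal hwmem (Submodule.smul_mem _ _ huW)
    have hsq2 : ‖∑ j, a j • e j‖ ^ 2
        = ‖a i • u‖ ^ 2 + ‖a i • (e i - u) + ∑ j ∈ univ.erase i, a j • e j‖ ^ 2 := by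
      rw [hsum]
      exact norm_sq_split hinner
    have hnormsmul : ‖a i • u‖ = |a i| * dd := by
      rw [norm_smul, Real.norm_eq_abs, hdd, hu]
    have h4 : (0:ℝ) ≤ ‖∑ j, a j • e j‖ := norm_nonneg _
    have h5 : (0:ℝ) ≤ |a i| * dd := mul_nonneg (abs_nonneg _) (norm_nonneg _)
    nlinarith [norm_nonneg (a i • (e i - u) + ∑ j ∈ univ.erase i, a j • e j), hsq2,
      hnormsmul]
  -- upper bound: E i ≤ Dc n * dd
  have hEpos : ∀ j : Fin n, (0:ℝ) < ‖e j‖ := fun j =>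
    norm_pos_iff.mpr (LinearIndependent.ne_zero j (indep hx))
  have hsplit : (∏ t ∈ univ.erase lst, ‖gsv f t‖) * dd = ∏ t, ‖gsv f t‖ :=
    Finset.prod_erase_mul univ _ (Finset.mem_univ lst)
  have hgle : ∏ t ∈ univ.erase lst, ‖gsv f t‖ ≤ ∏ t ∈ univ.erase lst, ‖f t‖ :=
    Finset.prod_le_prod (fun t _ => norm_nonneg _) (fun t _ => gsv_norm_le f t)
  have himg : Finset.image σ (univ.erase lst) = univ.erase i := by
    ext j
    simp only [Finset.mem_image, Finset.mem_erase, Finset.mem_univ, and_true]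
    constructor
    · rintro ⟨l, hl, rfl⟩
      intro hcon
      apply hl
      have : σ l = σ lst := by rw [hσlst]; exact hcon
      exact σ.injective this
    · intro hj
      refine ⟨σ j, ?_, hσself j⟩
      intro hcon
      apply hj
      have : σ (σ j) = σ lst := by rw [hcon]
      rw [hσself, hσlst] at this
      exact this
  have hreindex : ∏ t ∈ univ.erase lst, ‖f t‖ = ∏ j ∈ univ.erase i, ‖e j‖ := by
    rw [← himg, Finset.prod_image (fun t _ s _ h => σ.injective h)]
    rfl
  have hQpos : (0:ℝ) < ∏ j ∈ univ.erase i, ‖e j‖ :=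
    Finset.prod_pos fun j _ => hEpos j
  have htotalE : ∏ t : Fin n, ‖e t‖ = (∏ j ∈ univ.erase i, ‖e j‖) * ‖e i‖ :=
    (Finset.prod_erase_mul univ _ (Finset.mem_univ i)).symm
  have hchain : (∏ j ∈ univ.erase i, ‖e j‖) * ‖e i‖
      ≤ Dc n * ((∏ j ∈ univ.erase i, ‖e j‖) * dd) := by
    calc (∏ j ∈ univ.erase i, ‖e j‖) * ‖e i‖ = ∏ t : Fin n, ‖e t‖ := htotalE.symm
      _ ≤ Dc n * ∏ t : Fin n, ‖gsv e t‖ := prod_E_le hn hx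
      _ = Dc n * ∏ t : Fin n, ‖gsv f t‖ := by rw [hprodeq]
      _ = Dc n * ((∏ t ∈ univ.erase lst, ‖gsv f t‖) * dd) := by rw [hsplit]
      _ ≤ Dc n * ((∏ j ∈ univ.erase i, ‖e j‖) * dd) := by
          refine mul_le_mul_of_nonneg_left ?_ (Dc_pos n).le
          refine mul_le_mul_of_nonneg_right ?_ (norm_nonneg _)
          rw [← hreindex]
          exact hgle
  have hEdd : ‖e i‖ ≤ Dc n * dd := by
    have h6 : ‖e i‖ * (∏ j ∈ univ.erase i, ‖e j‖)
        ≤ (Dc n * dd) * (∏ j ∈ univ.erase i, ‖e j‖) := by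
      calc ‖e i‖ * (∏ j ∈ univ.erase i, ‖e j‖)
          = (∏ j ∈ univ.erase i, ‖e j‖) * ‖e i‖ := by ring
        _ ≤ Dc n * ((∏ j ∈ univ.erase i, ‖e j‖) * dd) := hchain
        _ = (Dc n * dd) * (∏ j ∈ univ.erase i, ‖e j‖) := by ring
    exact le_of_mul_le_mul_right h6 hQpos
  -- finish
  have hD0 : (0:ℝ) < Dc n := Dc_pos n
  have hnormai : ‖a i • e i‖ = |a i| * ‖e i‖ := by rw [norm_smul, Real.norm_eq_abs]
  rw [hnormai]
  have h7 : |a i| * ‖e i‖ ≤ |a i| * (Dc n * dd) :=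
    mul_le_mul_of_nonneg_left hEdd (abs_nonneg _)
  calc (1 / Dc n) * (|a i| * ‖e i‖) ≤ (1 / Dc n) * (|a i| * (Dc n * dd)) :=
        mul_le_mul_of_nonneg_left h7 (by positivity)
    _ = |a i| * dd := by field_simp
    _ ≤ ‖∑ j, a j • e j‖ := hlower


end Part9
end

section
/- Every finite-index subgroup N of ℤⁿ admits a minimal generating tuple, and for any minimal generating tuple (x₁,…,xₙ) of N, the vectors x₁,…,xₙ are linearly independent over ℝ and generate N as a group. -/
lemma toR_injective (n : ℕ) : Function.Injective (toR (n := n)) := fun x y h =>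
  funext fun i => Int.cast_injective (congrFun (congrArg WithLp.ofLp h) i)

lemma li_of_earlier {m : ℕ} {E : Type*} [AddCommGroup E] [Module ℝ E]
    {v : Fin m → E} (h : ∀ i, v i ∉ Submodule.span ℝ (v '' {j | j < i})) :
    LinearIndependent ℝ v := by
  classical
  rw [Fintype.linearIndependent_iff]
  intro c hc
  by_contra hne
  push_neg at hne
  obtain ⟨i0, hi0⟩ := hne
  set s : Finset (Fin m) := Finset.univ.filter (fun i => c i ≠ 0) with hs
  have hsne : s.Nonempty := ⟨i0, by simp [hs, hi0]⟩
  set i := s.max' hsne with hi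
  have hci : c i ≠ 0 := by
    have := s.max'_mem hsne
    simpa [hs] using this
  have hmem : v i ∈ Submodule.span ℝ (v '' {j | j < i}) := by
    have hsum : c i • v i = -∑ j ∈ Finset.univ.erase i, c j • v j := by
      have h1 := Finset.add_sum_erase Finset.univ (fun j => c j • v j) (Finset.mem_univ i)
      rw [hc] at h1
      exact eq_neg_of_add_eq_zero_left h1
    have hvi : v i = (c i)⁻¹ • (c i • v i) := by
      rw [smul_smul, inv_mul_cancel₀ hci, one_smul]
    rw [hvi, hsum]
    refine Submodule.smul_mem _ _ (Submodule.neg_mem _ (Submodule.sum_mem _ ?_))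
    intro j hj
    rcases eq_or_ne (c j) 0 with h0 | h0
    · rw [h0, zero_smul]; exact Submodule.zero_mem _
    · refine Submodule.smul_mem _ _ (Submodule.subset_span ⟨j, ?_, rfl⟩)
      have hji : j ≤ i := s.le_max' j (by simp [hs, h0])
      exact lt_of_le_of_ne hji (Finset.ne_of_mem_erase hj)
  exact h i hmem

lemma norm_toR_mono {n : ℕ} {u w : Fin n → ℤ}
    (h : ∑ i, (u i) ^ 2 ≤ ∑ i, (w i) ^ 2) : ‖toR u‖ ≤ ‖toR w‖ := by
  have e : ∀ y : Fin n → ℤ, ‖toR y‖ = Real.sqrt ((∑ i, (y i) ^ 2 : ℤ) : ℝ) := by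
    intro y
    rw [EuclideanSpace.norm_eq]
    congr 1
    push_cast
    exact Finset.sum_congr rfl fun i _ => by
      rw [Real.norm_eq_abs, sq_abs]; rfl
  rw [e u, e w]
  exact Real.sqrt_le_sqrt (by exact_mod_cast h)

lemma toR_zero {n : ℕ} : toR (0 : Fin n → ℤ) = 0 := by
  ext i; simp [toR]

lemma spanCond_empty {n : ℕ} (N : AddSubgroup (Fin n → ℤ)) :
    SpanCond N (∅ : Set (Fin n → ℤ)) := by
  unfold SpanCond
  rw [Set.image_empty, Submodule.span_empty, AddSubgroup.closure_empty]
  apply Set.ext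
  intro u
  simp only [Set.mem_setOf_eq, Submodule.mem_bot, AddSubgroup.coe_bot, Set.mem_singleton_iff]
  constructor
  · rintro ⟨h1, h2⟩
    exact toR_injective n (by simpa [toR_zero] using h2)
  · rintro rfl
    exact ⟨N.zero_mem, by rw [toR_zero]⟩

lemma bridge {n : ℕ} {ι : Type*} [Fintype ι] {v : ι → (Fin n → ℤ)}
    (hv : LinearIndependent ℤ v) : LinearIndependent ℝ (fun i => toR (v i)) := by
  classical
  set w : ι → (Fin n → ℚ) := fun i k => (v i k : ℚ) with hwdef
  -- Step A: ℚ-linear independence of w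
  have hq : LinearIndependent ℚ w := by
    rw [Fintype.linearIndependent_iff]
    intro c hc
    obtain ⟨b, hb⟩ := IsLocalization.exist_integer_multiples_of_finite
      (nonZeroDivisors ℤ) c
    choose e he using hb
    have hcast : ∀ i, (e i : ℚ) = ((b : ℤ) : ℚ) * c i := by
      intro i
      have := he i
      rw [zsmul_eq_mul] at this
      exact_mod_cast this
    have he0 : ∀ i, e i = 0 := by
      rw [Fintype.linearIndependent_iff] at hv
      apply hv
      funext k
      have hck : ∑ i, c i * (v i k : ℚ) = 0 := by
        have := congrFun hc k
        simpa [Finset.sum_apply, hwdef] using this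
      have key : ((∑ i, e i * v i k : ℤ) : ℚ) = 0 := by
        push_cast
        calc ∑ i, (e i : ℚ) * (v i k : ℚ)
            = ((b : ℤ) : ℚ) * ∑ i, c i * (v i k : ℚ) := by
              rw [Finset.mul_sum]
              exact Finset.sum_congr rfl fun i _ => by rw [hcast i]; ring
          _ = 0 := by rw [hck, mul_zero]
      have h4 : ∑ i, e i * v i k = 0 := by exact_mod_cast key
      simpa [Finset.sum_apply, smul_eq_mul] using h4
    intro i
    have hb0 : ((b : ℤ) : ℚ) ≠ 0 := by
      exact_mod_cast nonZeroDivisors.coe_ne_zero b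
    have := hcast i
    rw [he0 i] at this
    simpa [hb0] using this.symm
  -- Step B: left inverse for the combination map
  let sgl : ι → (ι → ℚ) := fun i => Pi.single i 1
  let sglF : Fin n → (Fin n → ℚ) := fun k => Pi.single k 1
  let L : (ι → ℚ) →ₗ[ℚ] (Fin n → ℚ) :=
    { toFun := fun c => ∑ i, c i • w i
      map_add' := fun a b => by simp [add_smul, Finset.sum_add_distrib]
      map_smul' := fun r a => by simp [Finset.smul_sum, smul_smul] }
  have hker : LinearMap.ker L = ⊥ := by
    rw [LinearMap.ker_eq_bot']
    intro c hc
    rw [Fintype.linearIndependent_iff] at hq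
    exact funext (hq c hc)
  obtain ⟨g, hg⟩ := L.exists_leftInverse_of_injective hker
  have hgL : ∀ u : ι → ℚ, g (L u) = u := fun u => by
    have := LinearMap.ext_iff.mp hg u
    simpa using this
  have hgw : ∀ i, g (w i) = sgl i := by
    intro i
    have hLs : L (sgl i) = w i := by
      show (∑ j, sgl i j • w j) = w i
      simp [sgl, Pi.single_apply, ite_smul]
    rw [← hLs, hgL]
  have grep : ∀ (u : Fin n → ℚ) (j : ι),
      g u j = ∑ k, u k * g (sglF k) j := by
    intro u j
    have hu : u = ∑ k, u k • sglF k := by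
      funext m
      simp [Finset.sum_apply, sglF, Pi.single_apply, mul_ite]
    conv_lhs => rw [hu]
    rw [map_sum]
    simp [Finset.sum_apply]
  -- Step C: real linear independence (plain pi type first)
  have main : LinearIndependent ℝ (fun i => (fun k => (v i k : ℝ) : Fin n → ℝ)) := by
    rw [Fintype.linearIndependent_iff]
    intro c hc j
    set A : Fin n → ℝ := fun k => ((g (sglF k) j : ℚ) : ℝ) with hA
    have hk : ∀ k, ∑ i, c i * (v i k : ℝ) = 0 := by
      intro k
      simpa [Finset.sum_apply] using congrFun hc k
    have hinner : ∀ i, ∑ k, (v i k : ℝ) * A k = ((sgl i j : ℚ) : ℝ) := by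
      intro i
      have h1 : (g (w i) j : ℚ) = ∑ k, (v i k : ℚ) * g (sglF k) j := grep (w i) j
      rw [hgw i] at h1
      have := congrArg (fun q : ℚ => (q : ℝ)) h1
      push_cast at this
      rw [this]
    have hswap : ∑ i, c i * ((sgl i j : ℚ) : ℝ) = 0 := by
      have e1 : ∑ i, c i * ∑ k, (v i k : ℝ) * A k
          = ∑ k, (∑ i, c i * (v i k : ℝ)) * A k := by
        simp_rw [Finset.mul_sum, Finset.sum_mul]
        rw [Finset.sum_comm]
        simp [mul_assoc]
      have e2 : ∑ i, c i * ∑ k, (v i k : ℝ) * A k = 0 := by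
        rw [e1]
        simp [hk]
      rw [← e2]
      exact Finset.sum_congr rfl fun i _ => by rw [hinner i]
    simpa [sgl, Pi.single_apply, apply_ite, mul_ite, Finset.sum_ite_eq] using hswap
  have := main.map' (WithLp.linearEquiv 2 ℝ (Fin n → ℝ)).symm.toLinearMap
    (LinearMap.ker_eq_bot.mpr (WithLp.linearEquiv 2 ℝ (Fin n → ℝ)).symm.injective)
  exact this

def toRlin (n : ℕ) : (Fin n → ℤ) →ₗ[ℤ] EuclideanSpace ℝ (Fin n) where
  toFun := toR
  map_add' x y := by ext i; simp [toR]
  map_smul' c x := by ext i; simp [toR]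

lemma toR_zsmul {n : ℕ} (c : ℤ) (x : Fin n → ℤ) : toR (c • x) = (c : ℝ) • toR x := by
  ext i; simp [toR]

lemma toR_sub {n : ℕ} (x y : Fin n → ℤ) : toR (x - y) = toR x - toR y := by
  ext i; simp [toR]

lemma exists_notin_span {n : ℕ} (N : AddSubgroup (Fin n → ℤ)) (hN : N.FiniteIndex)
    (W : Submodule ℝ (EuclideanSpace ℝ (Fin n))) (hW : W ≠ ⊤) :
    ∃ z ∈ N, toR z ∉ W := by
  classical
  by_contra hcon
  push_neg at hcon
  apply hW
  have hm : (N.index : ℝ) ≠ 0 := Nat.cast_ne_zero.mpr hN.index_ne_zero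
  have hsingle : ∀ i : Fin n, toR (Pi.single i (1 : ℤ)) ∈ W := by
    intro i
    have h1 : N.index • Pi.single i (1 : ℤ) ∈ N := AddSubgroup.nsmul_index_mem N _
    have h2 : toR (N.index • Pi.single i (1 : ℤ))
        = (N.index : ℝ) • toR (Pi.single i (1 : ℤ)) := by
      ext k
      simp [toR]
    have h3 := hcon _ h1
    rw [h2] at h3
    exact (W.smul_mem_iff hm).mp h3
  have hb : ∀ i : Fin n, (EuclideanSpace.basisFun (Fin n) ℝ) i ∈ W := by
    intro i
    have : toR (Pi.single i (1 : ℤ)) = EuclideanSpace.single i (1 : ℝ) := by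
      ext k
      by_cases h : k = i <;> simp [toR, h, EuclideanSpace.single, Pi.single_apply]
    rw [EuclideanSpace.basisFun_apply, ← this]
    exact hsingle i
  rw [eq_top_iff, ← (EuclideanSpace.basisFun (Fin n) ℝ).toBasis.span_eq]
  rw [Submodule.span_le]
  rintro - ⟨i, rfl⟩
  simpa using hb i

open Submodule Module

set_option maxHeartbeats 1600000 in
lemma exists_next {n : ℕ} (N : AddSubgroup (Fin n → ℤ)) (S : Set (Fin n → ℤ))
    (hSN : S ⊆ ↑N) (hS : SpanCond N S) (z : Fin n → ℤ) (hzN : z ∈ N)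
    (hz : toR z ∉ Submodule.span ℝ (toR '' S)) :
    ∃ y ∈ N, y ∉ AddSubgroup.closure S ∧ SpanCond N (insert y S) := by
  classical
  set W : Submodule ℝ (EuclideanSpace ℝ (Fin n)) := Submodule.span ℝ (toR '' S) with hWdef
  set V : Submodule ℝ (EuclideanSpace ℝ (Fin n)) := W ⊔ (ℝ ∙ toR z) with hVdef
  have hWV : W ≤ V := le_sup_left
  set Msub : Submodule ℤ (Fin n → ℤ) :=
    (AddSubgroup.toIntSubmodule N) ⊓ (V.restrictScalars ℤ).comap (toRlin n) with hMdef
  set Psub : Submodule ℤ (Fin n → ℤ) :=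
    (AddSubgroup.toIntSubmodule N) ⊓ (W.restrictScalars ℤ).comap (toRlin n) with hPdef
  have hMmem : ∀ u, u ∈ Msub ↔ u ∈ N ∧ toR u ∈ V := by
    intro u
    simp [hMdef, Submodule.mem_inf, Submodule.mem_comap]
    rfl
  have hPmem : ∀ u, u ∈ Psub ↔ u ∈ N ∧ toR u ∈ W := by
    intro u
    simp [hPdef, Submodule.mem_inf, Submodule.mem_comap]
    rfl
  have hPclosure : ∀ u, u ∈ Psub ↔ u ∈ AddSubgroup.closure S := by
    intro u
    rw [hPmem]
    constructor
    · intro hu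
      have := hS ▸ (Set.mem_setOf.mpr hu : u ∈ {y | y ∈ N ∧ toR y ∈ Submodule.span ℝ (toR '' S)})
      exact this
    · intro hu
      have : u ∈ {y : Fin n → ℤ | y ∈ N ∧ toR y ∈ Submodule.span ℝ (toR '' S)} := by
        rw [hS]; exact hu
      exact this
  have hPM : Psub ≤ Msub := inf_le_inf_left _ (Submodule.comap_mono
    (by exact fun a ha => hWV ha))
  -- quotient setup
  set PM : Submodule ℤ Msub := Psub.comap Msub.subtype with hPMdef
  have hPMmem : ∀ m : Msub, m ∈ PM ↔ (m : Fin n → ℤ) ∈ Psub := fun m => Iff.rfl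
  haveI : Module.Finite ℤ (Fin n → ℤ) := inferInstance
  haveI : Module.Finite ℤ Msub := Module.Finite.iff_fg.mpr (IsNoetherian.noetherian Msub)
  haveI : Module.Finite ℤ Psub := Module.Finite.iff_fg.mpr (IsNoetherian.noetherian Psub)
  haveI : Module.Finite ℤ (Msub ⧸ PM) := Module.Finite.of_surjective PM.mkQ PM.mkQ_surjective
  haveI : NoZeroSMulDivisors ℤ (Msub ⧸ PM) := by
    refine ⟨fun {c q} hcq => ?_⟩
    by_cases hc : c = 0
    · exact Or.inl hc
    · right
      obtain ⟨m, rfl⟩ := PM.mkQ_surjective q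
      rw [← map_smul, Submodule.mkQ_apply, Submodule.Quotient.mk_eq_zero] at hcq
      rw [Submodule.mkQ_apply, Submodule.Quotient.mk_eq_zero]
      rw [hPMmem] at hcq ⊢
      have hcoe : ((c • m : Msub) : Fin n → ℤ) = c • (m : Fin n → ℤ) := rfl
      rw [hcoe, hPmem] at hcq
      obtain ⟨h1, h2⟩ := hcq
      rw [toR_zsmul] at h2
      have hc' : (c : ℝ) ≠ 0 := Int.cast_ne_zero.mpr hc
      rw [hPmem]
      refine ⟨(hMmem _).mp m.2 |>.1, (W.smul_mem_iff hc').mp h2⟩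
  haveI : Module.Free ℤ (Msub ⧸ PM) := inferInstance
  set κ := Module.Free.ChooseBasisIndex ℤ (Msub ⧸ PM) with hka
  set bQ := Module.Free.chooseBasis ℤ (Msub ⧸ PM) with hbQ
  set ρ := Module.Free.ChooseBasisIndex ℤ Psub with hrho
  set bP := Module.Free.chooseBasis ℤ Psub with hbP
  have zMsub : z ∈ Msub :=
    (hMmem z).mpr ⟨hzN, Submodule.mem_sup_right (Submodule.mem_span_singleton_self (toR z))⟩
  set zM : Msub := ⟨z, zMsub⟩ with hzM
  have hzQ : PM.mkQ zM ≠ 0 := by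
    rw [Submodule.mkQ_apply, Ne, Submodule.Quotient.mk_eq_zero, hPMmem, hPmem]
    rintro ⟨-, h2⟩
    exact hz h2
  haveI : Nonempty κ := by
    by_contra hemp
    rw [not_nonempty_iff] at hemp
    apply hzQ
    have h0 : bQ.repr (PM.mkQ zM) = 0 := Finsupp.ext fun a => (hemp.false a).elim
    have h1 := congrArg bQ.repr.symm h0
    rwa [LinearEquiv.symm_apply_apply, map_zero] at h1
  have hliftE : ∀ j : κ, ∃ m : Msub, PM.mkQ m = bQ j := fun j => PM.mkQ_surjective (bQ j)
  choose lift hlift using hliftE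
  set pM : ρ → Msub := fun i => ⟨(bP i : Fin n → ℤ), hPM (bP i).2⟩ with hpM
  set F : ρ ⊕ κ → (Fin n → ℤ) :=
    Sum.elim (fun i => (bP i : Fin n → ℤ)) (fun j => (lift j : Fin n → ℤ)) with hF
  have hFLI : LinearIndependent ℤ F := by
    rw [Fintype.linearIndependent_iff]
    intro c hc
    rw [Fintype.sum_sum_type] at hc
    have hcM : ((∑ i, c (Sum.inl i) • pM i) + (∑ j, c (Sum.inr j) • lift j) : Msub) = 0 := by
      apply Subtype.ext
      simpa [hpM, hF] using hc
    have hQ0 : ∑ j, c (Sum.inr j) • bQ j = 0 := by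
      have h1 := congrArg PM.mkQ hcM
      rw [map_add, map_sum, map_sum, map_zero] at h1
      simp only [map_smul] at h1
      have hpc : ∀ i, PM.mkQ (pM i) = 0 := fun i => by
        rw [Submodule.mkQ_apply, Submodule.Quotient.mk_eq_zero, hPMmem]
        exact (bP i).2
      rw [Finset.sum_congr rfl (fun i _ => by rw [hpc i, smul_zero])] at h1
      simp only [hlift] at h1
      simpa using h1
    have hcr : ∀ j, c (Sum.inr j) = 0 :=
      Fintype.linearIndependent_iff.mp bQ.linearIndependent _ hQ0
    have hsum0 : (∑ i, c (Sum.inl i) • pM i : Msub) = 0 := by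
      rw [← hcM]
      simp [hcr]
    have hP0 : ∑ i, c (Sum.inl i) • bP i = 0 := by
      apply Subtype.ext
      have hval := congrArg (Msub.subtype) hsum0
      rw [map_sum, map_zero] at hval
      simp only [map_smul] at hval
      simpa [hpM] using hval
    have hcl : ∀ i, c (Sum.inl i) = 0 :=
      Fintype.linearIndependent_iff.mp bP.linearIndependent _ hP0
    intro t
    cases t with
    | inl i => exact hcl i
    | inr j => exact hcr j
  have hFmemV : ∀ t, toR (F t) ∈ V := by
    intro t
    cases t with
    | inl i => exact hWV ((hPmem _).mp (bP i).2).2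
    | inr j => exact ((hMmem _).mp (lift j).2).2
  set FV : ρ ⊕ κ → V := fun t => ⟨toR (F t), hFmemV t⟩ with hFVdef
  have hFVLI : LinearIndependent ℝ FV := by
    have h1 : LinearIndependent ℝ (fun t => toR (F t)) := bridge hFLI
    have h2 : (fun t => toR (F t)) = V.subtype ∘ FV := rfl
    rw [h2] at h1
    exact LinearIndependent.of_comp V.subtype h1
  have hcard1 : Fintype.card ρ + Fintype.card κ ≤ finrank ℝ V := by
    have h1 := hFVLI.fintype_card_le_finrank
    simpa [Fintype.card_sum] using h1
  have hz0 : toR z ≠ 0 := fun h => hz (h ▸ W.zero_mem)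
  have hVle : finrank ℝ V ≤ finrank ℝ W + 1 := by
    have h1 := Submodule.finrank_sup_add_finrank_inf_eq W (ℝ ∙ toR z)
    have h2 : finrank ℝ (ℝ ∙ toR z) = 1 := finrank_span_singleton hz0
    rw [h2, ← hVdef] at h1
    omega
  have hWle : finrank ℝ W ≤ Fintype.card ρ := by
    have hsub : W ≤ Submodule.span ℝ (Set.range fun i : ρ => toR (bP i : Fin n → ℤ)) := by
      rw [hWdef, Submodule.span_le]
      rintro - ⟨s, hsS, rfl⟩
      have hsP : s ∈ Psub := (hPmem s).mpr ⟨hSN hsS, Submodule.subset_span ⟨s, hsS, rfl⟩⟩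
      have hrepr := bP.sum_repr ⟨s, hsP⟩
      have hval : s = ∑ i, bP.repr ⟨s, hsP⟩ i • (bP i : Fin n → ℤ) := by
        have h3 := congrArg (Psub.subtype) hrepr
        rw [map_sum] at h3
        simp only [map_smul] at h3
        simpa using h3.symm
      rw [show toR s = toRlin n s from rfl, hval, map_sum]
      apply Submodule.sum_mem
      intro i _
      rw [map_smul, ← Int.cast_smul_eq_zsmul ℝ]
      exact Submodule.smul_mem _ _ (Submodule.subset_span ⟨i, rfl⟩)
    calc finrank ℝ W
        ≤ finrank ℝ (Submodule.span ℝ (Set.range fun i : ρ => toR (bP i : Fin n → ℤ))) :=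
          Submodule.finrank_mono hsub
      _ ≤ Fintype.card ρ := finrank_range_le_card _
  have hk1 : Fintype.card κ = 1 := by
    have h1 : 1 ≤ Fintype.card κ := Fintype.card_pos
    omega
  obtain ⟨j0, hj0⟩ := Fintype.card_eq_one_iff.mp hk1
  set yM : Msub := lift j0 with hyM
  set y : Fin n → ℤ := (yM : Fin n → ℤ) with hy
  have hyN : y ∈ N := ((hMmem _).mp yM.2).1
  have hdecomp : ∀ m : Msub, ∃ c : ℤ, (m : Fin n → ℤ) - c • y ∈ AddSubgroup.closure S := by
    intro m
    set q := PM.mkQ m with hq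
    refine ⟨bQ.repr q j0, ?_⟩
    have huniv : (Finset.univ : Finset κ) = {j0} := by
      apply Finset.ext
      intro a
      simp [hj0 a]
    have hqq : q = bQ.repr q j0 • bQ j0 := by
      conv_lhs => rw [← bQ.sum_repr q]
      rw [huniv, Finset.sum_singleton]
    have hmem : m - bQ.repr q j0 • yM ∈ PM := by
      rw [← Submodule.Quotient.mk_eq_zero PM, ← Submodule.mkQ_apply, map_sub, map_smul,
        hyM, hlift, ← hq, hqq]
      simp
    rw [hPMmem] at hmem
    exact (hPclosure _).mp hmem
  have hyW : toR y ∉ W := by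
    intro hW2
    have hPMy : yM ∈ PM := by
      rw [hPMmem, hPmem]
      exact ⟨hyN, hW2⟩
    have h0 : bQ j0 = 0 := by
      rw [← hlift j0, Submodule.mkQ_apply, Submodule.Quotient.mk_eq_zero]
      exact hPMy
    exact bQ.ne_zero j0 h0
  have hyCl : y ∉ AddSubgroup.closure S := by
    intro hcl
    exact hyW ((hPmem y).mp ((hPclosure y).mpr hcl)).2
  refine ⟨y, hyN, hyCl, ?_⟩
  set V2 := Submodule.span ℝ (toR '' insert y S) with hV2
  have hyV : toR y ∈ V := ((hMmem _).mp yM.2).2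
  have hV2le : V2 ≤ V := by
    rw [hV2, Set.image_insert_eq, Submodule.span_le]
    apply Set.insert_subset hyV
    intro u hu
    exact hWV (Submodule.subset_span hu)
  have hWleV2 : W ≤ V2 := by
    rw [hWdef, hV2]
    exact Submodule.span_mono (Set.image_mono (Set.subset_insert y S))
  have hyV2 : toR y ∈ V2 := Submodule.subset_span
    (by rw [Set.image_insert_eq]; exact Set.mem_insert _ _)
  unfold SpanCond
  apply Set.ext
  intro u
  constructor
  · rintro ⟨huN, huV2⟩
    have huM : u ∈ Msub := (hMmem u).mpr ⟨huN, hV2le huV2⟩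
    obtain ⟨c, hc⟩ := hdecomp ⟨u, huM⟩
    have h1 : u = (u - c • y) + c • y := (sub_add_cancel u (c • y)).symm
    have hyins : y ∈ AddSubgroup.closure (insert y S) :=
      AddSubgroup.subset_closure (Set.mem_insert _ _)
    have hSins : AddSubgroup.closure S ≤ AddSubgroup.closure (insert y S) :=
      AddSubgroup.closure_mono (Set.subset_insert _ _)
    rw [SetLike.mem_coe, h1]
    exact AddSubgroup.add_mem _ (hSins hc) (AddSubgroup.zsmul_mem _ hyins c)
  · intro hu
    rw [SetLike.mem_coe] at hu
    have huM : u ∈ Msub := by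
      have hle : AddSubgroup.closure (insert y S) ≤ Msub.toAddSubgroup := by
        rw [AddSubgroup.closure_le]
        apply Set.insert_subset
        · exact yM.2
        · intro s hsS
          exact hPM ((hPmem s).mpr ⟨hSN hsS, Submodule.subset_span ⟨s, hsS, rfl⟩⟩)
      exact hle hu
    refine ⟨((hMmem u).mp huM).1, ?_⟩
    obtain ⟨c, hc⟩ := hdecomp ⟨u, huM⟩
    have h2 : toR (u - c • y) ∈ W := ((hPmem _).mp ((hPclosure _).mpr hc)).2
    have h3 : toR u = toR (u - c • y) + (c : ℝ) • toR y := by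
      rw [toR_sub, toR_zsmul]
      abel
    rw [h3]
    exact V2.add_mem (hWleV2 h2) (Submodule.smul_mem _ _ hyV2)

def Conds {n : ℕ} (N : AddSubgroup (Fin n → ℤ)) (x : Fin n → (Fin n → ℤ)) (i : Fin n) : Prop :=
  x i ∈ N ∧
  x i ∉ AddSubgroup.closure (x '' {j | j < i}) ∧
  SpanCond N (x '' {j | j ≤ i}) ∧
  ∀ y ∈ N, y ∉ AddSubgroup.closure (x '' {j | j < i}) →
    SpanCond N (insert y (x '' {j | j < i})) → ‖toR (x i)‖ ≤ ‖toR y‖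

lemma build (n : ℕ) (N : AddSubgroup (Fin n → ℤ)) (hN : N.FiniteIndex) :
    ∀ k : ℕ, k ≤ n → ∃ x : Fin n → (Fin n → ℤ), ∀ i : Fin n, (i : ℕ) < k → Conds N x i := by
  intro k
  induction k with
  | zero => exact fun _ => ⟨fun _ => 0, fun i hi => absurd hi (Nat.not_lt_zero _)⟩
  | succ k ih =>
    intro hk1
    obtain ⟨x, hx⟩ := ih (Nat.le_of_succ_le hk1)
    set K : Fin n := ⟨k, hk1⟩ with hK
    have hKval : (K : ℕ) = k := rfl
    set prev := x '' {j | j < K} with hprev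
    have hprevN : prev ⊆ ↑N := by
      rintro - ⟨j, hj, rfl⟩
      exact (hx j hj).1
    have hSC : SpanCond N prev := by
      rcases Nat.eq_zero_or_pos k with hk0 | hkpos
      · have hpe : prev = ∅ := by
          rw [hprev]
          have : {j : Fin n | j < K} = ∅ := by
            ext j
            simp only [Set.mem_setOf_eq, Fin.lt_def, hKval, Set.mem_empty_iff_false, iff_false]
            omega
          rw [this, Set.image_empty]
        rw [hpe]
        exact spanCond_empty N
      · set K' : Fin n := ⟨k - 1, by omega⟩ with hK'
        have hK'val : (K' : ℕ) = k - 1 := rfl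
        have h1 := (hx K' (by rw [hK'val]; omega)).2.2.1
        have hseteq : x '' {j | j ≤ K'} = prev := by
          have hsets : {j : Fin n | j ≤ K'} = {j | j < K} := by
            ext j
            simp only [Set.mem_setOf_eq, Fin.le_def, Fin.lt_def, hK'val, hKval]
            omega
          rw [hprev, hsets]
        rwa [hseteq] at h1
    have hWne : Submodule.span ℝ (toR '' prev) ≠ ⊤ := by
      intro htop
      set g : Fin k → EuclideanSpace ℝ (Fin n) :=
        fun i => toR (x ⟨i.val, by omega⟩) with hg
      have hsub : toR '' prev ⊆ Set.range g := by
        rintro - ⟨-, ⟨j, hj, rfl⟩, rfl⟩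
        refine ⟨⟨j.val, hj⟩, ?_⟩
        rw [hg]
      have hle : Submodule.span ℝ (toR '' prev) ≤ Submodule.span ℝ (Set.range g) :=
        Submodule.span_mono hsub
      rw [htop, top_le_iff] at hle
      have h2 : Module.finrank ℝ (Submodule.span ℝ (Set.range g)) ≤ k :=
        (finrank_range_le_card g).trans (by simp)
      rw [hle] at h2
      rw [finrank_top, finrank_euclideanSpace_fin] at h2
      omega
    obtain ⟨z, hzN, hz⟩ := exists_notin_span N hN _ hWne
    obtain ⟨y0, hy0N, hy0c, hy0s⟩ := exists_next N prev hprevN hSC z hzN hz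
    set SS : Set (Fin n → ℤ) :=
      {y | y ∈ N ∧ y ∉ AddSubgroup.closure prev ∧ SpanCond N (insert y prev)} with hSS
    have hy0SS : y0 ∈ SS := ⟨hy0N, hy0c, hy0s⟩
    set T : Set ℕ := (fun y => (∑ i, (y i) ^ 2).toNat) '' SS with hT
    have hTne : T.Nonempty := ⟨_, y0, hy0SS, rfl⟩
    obtain ⟨ymin, hyminSS, hymineq0⟩ := Nat.sInf_mem hTne
    have hymineq : (∑ i, (ymin i) ^ 2).toNat = sInf T := hymineq0
    clear hymineq0
    have hminle : ∀ y ∈ SS, ‖toR ymin‖ ≤ ‖toR y‖ := by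
      intro y hy
      apply norm_toR_mono
      have h1 : (∑ i, (ymin i) ^ 2).toNat ≤ (∑ i, (y i) ^ 2).toNat := by
        rw [show (∑ i, (ymin i) ^ 2).toNat = sInf T from hymineq]
        exact Nat.sInf_le ⟨y, hy, rfl⟩
      have hn1 : (0 : ℤ) ≤ ∑ i, (ymin i) ^ 2 := Finset.sum_nonneg fun i _ => sq_nonneg _
      have hn2 : (0 : ℤ) ≤ ∑ i, (y i) ^ 2 := Finset.sum_nonneg fun i _ => sq_nonneg _
      omega
    obtain ⟨x', hx'⟩ : ∃ x', x' = Function.update x K ymin := ⟨_, rfl⟩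
    have hx'K : x' K = ymin := by rw [hx']; simp
    have hupd_lt : ∀ i : Fin n, i ≤ K → x' '' {j | j < i} = x '' {j | j < i} := by
      intro i hiK
      apply Set.image_congr
      intro j hj
      rw [hx']
      exact Function.update_of_ne (ne_of_lt (lt_of_lt_of_le hj hiK)) ymin x

    have hupd_le : ∀ i : Fin n, i < K → x' '' {j | j ≤ i} = x '' {j | j ≤ i} := by
      intro i hiK
      apply Set.image_congr
      intro j hj
      rw [hx']
      exact Function.update_of_ne (ne_of_lt (lt_of_le_of_lt hj hiK)) ymin x
    refine ⟨x', fun i hi => ?_⟩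
    rcases Nat.lt_or_ge i.val k with hik | hik
    · -- i < K
      have hiK : i < K := by
        rw [Fin.lt_def]
        exact hik
      have hc := hx i hik
      have hxi : x' i = x i := by
        rw [hx']
        exact Function.update_of_ne (ne_of_lt hiK) ymin x
      refine ⟨?_, ?_, ?_, ?_⟩
      · rw [hxi]; exact hc.1
      · rw [hxi, hupd_lt i (le_of_lt hiK)]; exact hc.2.1
      · rw [hupd_le i hiK]; exact hc.2.2.1
      · intro y hyN hyc hys
        rw [hupd_lt i (le_of_lt hiK)] at hyc hys
        rw [hxi]
        exact hc.2.2.2 y hyN hyc hys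
    · -- i = K
      have hiK : i = K := by
        rw [Fin.ext_iff, hKval]
        omega
      have himg : x' '' {j | j < i} = prev := by
        rw [hiK, hupd_lt K le_rfl, hprev]
      have hle_ins : x' '' {j | j ≤ i} = insert ymin prev := by
        rw [hiK]
        have h1 : {j : Fin n | j ≤ K} = insert K {j | j < K} := by
          ext j
          simp only [Set.mem_setOf_eq, Set.mem_insert_iff]
          constructor
          · intro h
            rcases lt_or_eq_of_le h with h' | h'
            · exact Or.inr h'
            · exact Or.inl h'
          · rintro (rfl | h)
            · exact le_rfl
            · exact le_of_lt h
        rw [h1, Set.image_insert_eq, ← hiK, himg, hiK, hx'K]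
      refine ⟨?_, ?_, ?_, ?_⟩
      · rw [hiK, hx'K]; exact hyminSS.1
      · rw [hiK, hx'K, ← hiK, himg]; exact hyminSS.2.1
      · rw [hle_ins]; exact hyminSS.2.2
      · intro y hyN hyc hys
        rw [himg] at hyc hys
        rw [hiK, hx'K]
        exact hminle y ⟨hyN, hyc, hys⟩

lemma mingen_props {n : ℕ} (N : AddSubgroup (Fin n → ℤ)) (x : Fin n → (Fin n → ℤ))
    (hx : IsMinGenTuple N x) :
    LinearIndependent ℝ (fun i => toR (x i)) ∧ AddSubgroup.closure (Set.range x) = N := by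
  have hnotin : ∀ i, toR (x i) ∉ Submodule.span ℝ (toR '' (x '' {j | j < i})) := by
    intro i hi
    rcases Nat.eq_zero_or_pos i.val with h0 | hpos
    · have hempty : {j : Fin n | j < i} = ∅ := by
        ext j
        simp [Fin.lt_def, h0]
      rw [hempty, Set.image_empty, Set.image_empty, Submodule.span_empty,
        Submodule.mem_bot] at hi
      have hx0 : x i = 0 := toR_injective n (by simpa [toR_zero] using hi)
      have h21 := (hx i).2.1
      rw [hempty, Set.image_empty] at h21
      exact h21 (by rw [hx0]; exact AddSubgroup.zero_mem _)
    · set i' : Fin n := ⟨i.val - 1, by omega⟩ with hi'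
      have hSC := (hx i').2.2.1
      have hset : {j : Fin n | j ≤ i'} = {j | j < i} := by
        ext j
        simp only [Set.mem_setOf_eq, Fin.le_def, Fin.lt_def, hi']
        omega
      rw [hset] at hSC
      have hmem : x i ∈ {y : Fin n → ℤ | y ∈ N ∧
          toR y ∈ Submodule.span ℝ (toR '' (x '' {j | j < i}))} := ⟨(hx i).1, hi⟩
      rw [hSC] at hmem
      exact (hx i).2.1 hmem
  have hLI : LinearIndependent ℝ (fun i => toR (x i)) := by
    apply li_of_earlier
    intro i
    have himg : (fun i => toR (x i)) '' {j | j < i} = toR '' (x '' {j | j < i}) := by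
      rw [Set.image_image]
    rw [himg]
    exact hnotin i
  refine ⟨hLI, ?_⟩
  rcases Nat.eq_zero_or_pos n with h0 | hpos
  · subst h0
    ext u
    have hu : u = 0 := funext fun i => absurd i.isLt (by omega)
    subst hu
    constructor
    · intro _
      exact N.zero_mem
    · intro _
      exact AddSubgroup.zero_mem _
  · set L : Fin n := ⟨n - 1, by omega⟩ with hL
    have hSC := (hx L).2.2.1
    have hall : {j : Fin n | j ≤ L} = Set.univ := by
      ext j
      simp only [Set.mem_setOf_eq, Fin.le_def, Set.mem_univ, iff_true, hL]
      omega
    rw [hall, Set.image_univ] at hSC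
    have hspan : Submodule.span ℝ (toR '' Set.range x) = ⊤ := by
      have h1 : toR '' Set.range x = Set.range fun i => toR (x i) := by
        rw [← Set.range_comp]
        rfl
      rw [h1]
      haveI : Nonempty (Fin n) := ⟨⟨0, hpos⟩⟩
      apply hLI.span_eq_top_of_card_eq_finrank
      simp [finrank_euclideanSpace_fin]
    ext u
    constructor
    · intro hu
      have hmem : u ∈ {y : Fin n → ℤ | y ∈ N ∧
          toR y ∈ Submodule.span ℝ (toR '' Set.range x)} := by
        rw [hSC]
        exact hu
      exact hmem.1
    · intro hu
      have hmem : u ∈ {y : Fin n → ℤ | y ∈ N ∧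
          toR y ∈ Submodule.span ℝ (toR '' Set.range x)} := ⟨hu, by rw [hspan]; trivial⟩
      rw [hSC] at hmem
      exact hmem

/-- Every finite-index subgroup `N` of `ℤⁿ` admits a minimal generating tuple,
and for any minimal generating tuple `(x₁,…,xₙ)` of `N`, the vectors `x₁,…,xₙ` are linearly
independent over `ℝ` and generate `N` as a group. -/
theorem stmt5 (n : ℕ) (N : AddSubgroup (Fin n → ℤ)) (hN : N.FiniteIndex) :
    (∃ x : Fin n → (Fin n → ℤ), IsMinGenTuple N x) ∧
      ∀ x : Fin n → (Fin n → ℤ), IsMinGenTuple N x →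
        LinearIndependent ℝ (fun i => toR (x i)) ∧
          AddSubgroup.closure (Set.range x) = N := by
  constructor
  · obtain ⟨x, hx⟩ := build n N hN n le_rfl
    exact ⟨x, fun i => hx i i.isLt⟩
  · intro x hx
    exact mingen_props N x hx
end
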